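/- arXiv:1807.02899 — 2 statements merged into one kernel-verified Lean document; each statement's English description precedes it below -/
import Mathlib

section
/- Let G be a connected (n, m) graph with m > n ≥ 4. Then the spread of G is at most the spread of its line graph: S(G) ≤ S_L(G), with equality if and only if G is a regular bipartite graph. -/
open Matrix Polynomial BigOperators

noncomputable section

namespace SpreadPaper

variable {V : Type*}

/-- The adjacency matrix of a simple graph over `ℝ` (classical decidability). -/
noncomputable def adjMat (G : SimpleGraph V) : Matrix V V ℝ :=
  letI := Classical.decRel G.Adj
  G.adjMatrix ℝ

lemma adjMat_isHermitian (G : SimpleGraph V) : (adjMat G).IsHermitian := by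
  letI := Classical.decRel G.Adj
  ext i j
  simp [adjMat, Matrix.conjTranspose_apply, SimpleGraph.adjMatrix_apply, G.adj_comm]

/-- The degree of a vertex (classical decidability). -/
noncomputable def deg [Fintype V] (G : SimpleGraph V) (v : V) : ℕ :=
  letI := Classical.decRel G.Adj
  G.degree v

/-- The signless Laplacian matrix `D + A` of a graph. -/
noncomputable def signQ [Fintype V] [DecidableEq V] (G : SimpleGraph V) : Matrix V V ℝ :=
  Matrix.diagonal (fun v => (deg G v : ℝ)) + adjMat G

lemma signQ_isHermitian [Fintype V] [DecidableEq V] (G : SimpleGraph V) :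
    (signQ G).IsHermitian :=
  (Matrix.isHermitian_diagonal _).add (adjMat_isHermitian G)

/-- The Laplacian matrix `D - A` of a graph. -/
noncomputable def lap [Fintype V] [DecidableEq V] (G : SimpleGraph V) : Matrix V V ℝ :=
  Matrix.diagonal (fun v => (deg G v : ℝ)) - adjMat G

lemma lap_isHermitian [Fintype V] [DecidableEq V] (G : SimpleGraph V) :
    (lap G).IsHermitian :=
  (Matrix.isHermitian_diagonal _).sub (adjMat_isHermitian G)

/-- The largest eigenvalue of a Hermitian real matrix. -/
noncomputable def maxEig {m : Type*} [Fintype m] [DecidableEq m] {A : Matrix m m ℝ}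
    (hA : A.IsHermitian) : ℝ :=
  ⨆ i, hA.eigenvalues i

/-- The smallest eigenvalue of a Hermitian real matrix. -/
noncomputable def minEig {m : Type*} [Fintype m] [DecidableEq m] {A : Matrix m m ℝ}
    (hA : A.IsHermitian) : ℝ :=
  ⨅ i, hA.eigenvalues i

/-- The spread (largest minus smallest eigenvalue) of a Hermitian real matrix. -/
noncomputable def sprd {m : Type*} [Fintype m] [DecidableEq m] {A : Matrix m m ℝ}
    (hA : A.IsHermitian) : ℝ :=
  maxEig hA - minEig hA

/-- `q` lists the eigenvalues of the Hermitian matrix `A` (with multiplicity) in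
nonincreasing order. -/
def IsDescSpectrum {m : Type*} [Fintype m] [DecidableEq m] {A : Matrix m m ℝ}
    (hA : A.IsHermitian) {k : ℕ} (q : Fin k → ℝ) : Prop :=
  Antitone q ∧ ∃ e : Fin k ≃ m, ∀ i, q i = hA.eigenvalues (e i)

noncomputable instance edgeSetFintype [Fintype V] (G : SimpleGraph V) : Fintype G.edgeSet :=
  Set.Finite.fintype (Set.toFinite _)

/-- The number of edges of a graph. -/
noncomputable def numEdges (G : SimpleGraph V) : ℕ := Nat.card G.edgeSet

/-- The total graph of `G`: vertices are the vertices and edges of `G`, with adjacency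
given by adjacency in `G`, adjacency in the line graph, or vertex-edge incidence. -/
def totalGraph (G : SimpleGraph V) : SimpleGraph (V ⊕ G.edgeSet) where
  Adj x y :=
    match x, y with
    | Sum.inl u, Sum.inl v => G.Adj u v
    | Sum.inl u, Sum.inr e => u ∈ (e : Sym2 V)
    | Sum.inr e, Sum.inl u => u ∈ (e : Sym2 V)
    | Sum.inr e, Sum.inr f => e ≠ f ∧ ∃ v, v ∈ (e : Sym2 V) ∧ v ∈ (f : Sym2 V)
  symm := by
    constructor
    rintro (u|e) (v|f) h
    · exact G.symm.symm _ _ h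
    · exact h
    · exact h
    · exact ⟨h.1.symm, h.2.choose, h.2.choose_spec.2, h.2.choose_spec.1⟩
  loopless := by
    constructor
    rintro (u|e) h
    · exact G.loopless.irrefl u h
    · exact h.1 rfl

/-- The join `G ∨ H` of two graphs: all edges between the two vertex sets are added. -/
def joinG {α β : Type*} (G : SimpleGraph α) (H : SimpleGraph β) : SimpleGraph (α ⊕ β) where
  Adj x y :=
    match x, y with
    | Sum.inl a, Sum.inl b => G.Adj a b
    | Sum.inr a, Sum.inr b => H.Adj a b
    | Sum.inl _, Sum.inr _ => True
    | Sum.inr _, Sum.inl _ => True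
  symm := by
    constructor
    rintro (a|a) (b|b) h
    · exact G.symm.symm _ _ h
    · exact trivial
    · exact trivial
    · exact H.symm.symm _ _ h
  loopless := by
    constructor
    rintro (a|a) h
    · exact G.loopless.irrefl a h
    · exact H.loopless.irrefl a h

/-- The disjoint union of two graphs. -/
def dunion {α β : Type*} (G : SimpleGraph α) (H : SimpleGraph β) : SimpleGraph (α ⊕ β) where
  Adj x y :=
    match x, y with
    | Sum.inl a, Sum.inl b => G.Adj a b
    | Sum.inr a, Sum.inr b => H.Adj a b
    | Sum.inl _, Sum.inr _ => False
    | Sum.inr _, Sum.inl _ => False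
  symm := by
    constructor
    rintro (a|a) (b|b) h
    · exact G.symm.symm _ _ h
    · exact h.elim
    · exact h.elim
    · exact H.symm.symm _ _ h
  loopless := by
    constructor
    rintro (a|a) h
    · exact G.loopless.irrefl a h
    · exact H.loopless.irrefl a h

/-- `G` is `r`-regular. -/
def IsReg [Fintype V] (G : SimpleGraph V) (r : ℕ) : Prop := ∀ v, deg G v = r

/-- The minimum degree of a graph. -/
noncomputable def minDeg [Fintype V] (G : SimpleGraph V) : ℕ := sInf (Set.range (deg G))

/-- The maximum degree of a graph. -/
noncomputable def maxDeg [Fintype V] (G : SimpleGraph V) : ℕ := sSup (Set.range (deg G))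

/-- The first Zagreb index of a graph: the sum of the squares of the vertex degrees. -/
noncomputable def zagreb [Fintype V] (G : SimpleGraph V) : ℕ := ∑ v, (deg G v) ^ 2

/-- The vertex connectivity of `G` is at most `k`: some set of at most `k` vertices
disconnects `G`. -/
def HasConnLe (G : SimpleGraph V) (k : ℕ) : Prop :=
  ∃ U : Set V, Nat.card U ≤ k ∧ (Uᶜ).Nonempty ∧ ¬ (G.induce Uᶜ).Preconnected

/-! ### Auxiliary spectral machinery -/

section CoreSpectral

variable {ι : Type*} [Fintype ι] [DecidableEq ι] {A : Matrix ι ι ℝ}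

/-- Coordinates of a vector in the orthonormal eigenbasis of a Hermitian matrix. -/
noncomputable def coords (hA : A.IsHermitian) (x : ι → ℝ) : ι → ℝ :=
  (star (hA.eigenvectorUnitary : Matrix ι ι ℝ)) *ᵥ x

lemma mulVec_coords (hA : A.IsHermitian) (x : ι → ℝ) :
    (hA.eigenvectorUnitary : Matrix ι ι ℝ) *ᵥ coords hA x = x := by
  rw [coords, Matrix.mulVec_mulVec, (Matrix.mem_unitaryGroup_iff).mp hA.eigenvectorUnitary.2,
    Matrix.one_mulVec]

lemma dot_self_coords (hA : A.IsHermitian) (x : ι → ℝ) :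
    ∑ i, (coords hA x i)^2 = x ⬝ᵥ x := by
  have h1 : coords hA x ⬝ᵥ coords hA x = x ⬝ᵥ x := by
    rw [coords, show (star (hA.eigenvectorUnitary : Matrix ι ι ℝ)) = (hA.eigenvectorUnitary : Matrix ι ι ℝ)ᵀ from rfl, Matrix.mulVec_transpose]
    nth_rewrite 2 [← Matrix.mulVec_transpose]
    rw [Matrix.dotProduct_mulVec, Matrix.vecMul_vecMul, ← show (star (hA.eigenvectorUnitary : Matrix ι ι ℝ)) = (hA.eigenvectorUnitary : Matrix ι ι ℝ)ᵀ from rfl,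
      (Matrix.mem_unitaryGroup_iff).mp hA.eigenvectorUnitary.2, Matrix.vecMul_one]
  rw [← h1]; simp [dotProduct, sq]

lemma dot_mulVec_coords (hA : A.IsHermitian) (x : ι → ℝ) :
    x ⬝ᵥ (A *ᵥ x) = ∑ i, hA.eigenvalues i * (coords hA x i)^2 := by
  conv_lhs => rw [hA.spectral_theorem, Unitary.conjStarAlgAut_apply]
  rw [← Matrix.mulVec_mulVec, ← Matrix.mulVec_mulVec, Matrix.dotProduct_mulVec,
    show (x ᵥ* (hA.eigenvectorUnitary : Matrix ι ι ℝ)) = coords hA x by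
      rw [coords, show (star (hA.eigenvectorUnitary : Matrix ι ι ℝ)) = (hA.eigenvectorUnitary : Matrix ι ι ℝ)ᵀ from rfl, Matrix.mulVec_transpose]]
  rw [show ((star (hA.eigenvectorUnitary : Matrix ι ι ℝ)) *ᵥ x) = coords hA x from rfl]
  rw [show (RCLike.ofReal ∘ hA.eigenvalues : ι → ℝ) = hA.eigenvalues from rfl]
  rw [dotProduct, Finset.sum_congr rfl (fun i _ => by rw [Matrix.mulVec_diagonal])]
  congr 1; ext i; ring

set_option linter.unusedSectionVars false

variable [Nonempty ι]

lemma eigenvalues_le_maxEig (hA : A.IsHermitian) (i : ι) : hA.eigenvalues i ≤ maxEig hA :=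
  le_ciSup (Set.Finite.bddAbove (Set.finite_range _)) i

lemma minEig_le_eigenvalues (hA : A.IsHermitian) (i : ι) : minEig hA ≤ hA.eigenvalues i :=
  ciInf_le (Set.Finite.bddBelow (Set.finite_range _)) i

lemma exists_maxEig_eq (hA : A.IsHermitian) : ∃ i, hA.eigenvalues i = maxEig hA := by
  obtain ⟨i, hi⟩ := Finite.exists_max hA.eigenvalues
  exact ⟨i, le_antisymm (eigenvalues_le_maxEig hA i) (ciSup_le hi)⟩

lemma exists_minEig_eq (hA : A.IsHermitian) : ∃ i, hA.eigenvalues i = minEig hA := by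
  obtain ⟨i, hi⟩ := Finite.exists_min hA.eigenvalues
  exact ⟨i, le_antisymm (le_ciInf hi) (minEig_le_eigenvalues hA i)⟩

lemma rayleigh_le_max (hA : A.IsHermitian) (x : ι → ℝ) :
    x ⬝ᵥ (A *ᵥ x) ≤ maxEig hA * (x ⬝ᵥ x) := by
  rw [dot_mulVec_coords hA, ← dot_self_coords hA x, Finset.mul_sum]
  exact Finset.sum_le_sum fun i _ => mul_le_mul_of_nonneg_right
    (eigenvalues_le_maxEig hA i) (sq_nonneg _)

lemma min_le_rayleigh (hA : A.IsHermitian) (x : ι → ℝ) :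
    minEig hA * (x ⬝ᵥ x) ≤ x ⬝ᵥ (A *ᵥ x) := by
  rw [dot_mulVec_coords hA, ← dot_self_coords hA x, Finset.mul_sum]
  exact Finset.sum_le_sum fun i _ => mul_le_mul_of_nonneg_right
    (minEig_le_eigenvalues hA i) (sq_nonneg _)

lemma dot_self_pos {x : ι → ℝ} (hx : x ≠ 0) : 0 < x ⬝ᵥ x := by
  rcases Function.ne_iff.mp hx with ⟨i, hi⟩
  have h0 : (0:ℝ) < x i ^ 2 := lt_of_le_of_ne (sq_nonneg _) (Ne.symm (pow_ne_zero 2 hi))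
  calc (0:ℝ) < x i ^ 2 := h0
    _ ≤ ∑ j, x j ^ 2 := Finset.single_le_sum (fun j _ => sq_nonneg (x j)) (Finset.mem_univ i)
    _ = x ⬝ᵥ x := by simp [dotProduct, sq]

lemma exists_maxEig_vec (hA : A.IsHermitian) :
    ∃ x : ι → ℝ, x ≠ 0 ∧ A *ᵥ x = maxEig hA • x := by
  obtain ⟨j, hj⟩ := exists_maxEig_eq hA
  refine ⟨⇑(hA.eigenvectorBasis j), ?_, by rw [hA.mulVec_eigenvectorBasis, hj]⟩
  intro h
  have h0 : hA.eigenvectorBasis j = 0 := by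
    apply (WithLp.equiv 2 _).injective
    ext i
    exact congrFun h i
  have := hA.eigenvectorBasis.orthonormal.1 j
  rw [h0] at this
  simp at this

lemma exists_minEig_vec (hA : A.IsHermitian) :
    ∃ x : ι → ℝ, x ≠ 0 ∧ A *ᵥ x = minEig hA • x := by
  obtain ⟨j, hj⟩ := exists_minEig_eq hA
  refine ⟨⇑(hA.eigenvectorBasis j), ?_, by rw [hA.mulVec_eigenvectorBasis, hj]⟩
  intro h
  have h0 : hA.eigenvectorBasis j = 0 := by
    apply (WithLp.equiv 2 _).injective
    ext i
    exact congrFun h i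
  have := hA.eigenvectorBasis.orthonormal.1 j
  rw [h0] at this
  simp at this

lemma eig_le_maxEig (hA : A.IsHermitian) {x : ι → ℝ} {μ : ℝ} (hx : x ≠ 0)
    (h : A *ᵥ x = μ • x) : μ ≤ maxEig hA := by
  have h2 := rayleigh_le_max hA x
  rw [h, dotProduct_smul, smul_eq_mul] at h2
  exact le_of_mul_le_mul_right h2 (dot_self_pos hx)

lemma minEig_le_eig (hA : A.IsHermitian) {x : ι → ℝ} {μ : ℝ} (hx : x ≠ 0)
    (h : A *ᵥ x = μ • x) : minEig hA ≤ μ := by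
  have h2 := min_le_rayleigh hA x
  rw [h, dotProduct_smul, smul_eq_mul] at h2
  exact le_of_mul_le_mul_right h2 (dot_self_pos hx)

/-- Rayleigh maximizers are eigenvectors. -/
lemma eigvec_of_rayleigh_eq_max (hA : A.IsHermitian) {x : ι → ℝ}
    (h : x ⬝ᵥ (A *ᵥ x) = maxEig hA * (x ⬝ᵥ x)) : A *ᵥ x = maxEig hA • x := by
  have key : ∀ i, hA.eigenvalues i * coords hA x i = maxEig hA * coords hA x i := by
    have hzero : ∑ i, (maxEig hA - hA.eigenvalues i) * (coords hA x i)^2 = 0 := by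
      have hh := dot_mulVec_coords hA x
      rw [h, ← dot_self_coords hA x, Finset.mul_sum] at hh
      rw [Finset.sum_congr rfl (fun i _ => sub_mul (maxEig hA) (hA.eigenvalues i) ((coords hA x i)^2)),
        Finset.sum_sub_distrib, hh, sub_self]
    have hterm : ∀ i ∈ Finset.univ, (maxEig hA - hA.eigenvalues i) * (coords hA x i)^2 = 0 :=
      (Finset.sum_eq_zero_iff_of_nonneg (fun i _ => mul_nonneg
        (sub_nonneg.mpr (eigenvalues_le_maxEig hA i)) (sq_nonneg _))).mp hzero
    intro i
    rcases mul_eq_zero.mp (hterm i (Finset.mem_univ i)) with h1 | h1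
    · rw [sub_eq_zero] at h1; rw [h1]
    · rw [pow_eq_zero_iff (by norm_num)] at h1; rw [h1, mul_zero, mul_zero]
  have hstep : A *ᵥ x = (hA.eigenvectorUnitary : Matrix ι ι ℝ) *ᵥ (fun i => hA.eigenvalues i * coords hA x i) := by
    conv_lhs => rw [hA.spectral_theorem, Unitary.conjStarAlgAut_apply]
    rw [← Matrix.mulVec_mulVec, ← Matrix.mulVec_mulVec,
      show ((star (hA.eigenvectorUnitary : Matrix ι ι ℝ)) *ᵥ x) = coords hA x from rfl,
      show (RCLike.ofReal ∘ hA.eigenvalues : ι → ℝ) = hA.eigenvalues from rfl]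
    rw [show (Matrix.diagonal hA.eigenvalues *ᵥ coords hA x) = (fun i => hA.eigenvalues i * coords hA x i) from funext fun i => Matrix.mulVec_diagonal _ _ _]
  rw [hstep, funext key]
  rw [show (fun i => maxEig hA * coords hA x i) = maxEig hA • coords hA x from rfl,
    Matrix.mulVec_smul, mulVec_coords]

lemma maxEig_shift (hA : A.IsHermitian) (c : ℝ) (hB : (A + c • 1).IsHermitian) :
    maxEig hB = maxEig hA + c := by
  have h1 : maxEig hA + c ≤ maxEig hB := by
    obtain ⟨x, hx, hEq⟩ := exists_maxEig_vec hA
    refine eig_le_maxEig hB hx ?_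
    rw [Matrix.add_mulVec, hEq, Matrix.smul_mulVec, Matrix.one_mulVec, add_smul]
  have h2 : maxEig hB - c ≤ maxEig hA := by
    obtain ⟨x, hx, hEq⟩ := exists_maxEig_vec hB
    refine eig_le_maxEig hA hx ?_
    have hh : A *ᵥ x = (A + c • 1) *ᵥ x - c • x := by
      rw [Matrix.add_mulVec, Matrix.smul_mulVec, Matrix.one_mulVec, add_sub_cancel_right]
    rw [hh, hEq, sub_smul]
  linarith

lemma minEig_shift (hA : A.IsHermitian) (c : ℝ) (hB : (A + c • 1).IsHermitian) :
    minEig hB = minEig hA + c := by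
  have h1 : minEig hB ≤ minEig hA + c := by
    obtain ⟨x, hx, hEq⟩ := exists_minEig_vec hA
    refine minEig_le_eig hB hx ?_
    rw [Matrix.add_mulVec, hEq, Matrix.smul_mulVec, Matrix.one_mulVec, add_smul]
  have h2 : minEig hA ≤ minEig hB - c := by
    obtain ⟨x, hx, hEq⟩ := exists_minEig_vec hB
    refine minEig_le_eig hA hx ?_
    have hh : A *ᵥ x = (A + c • 1) *ᵥ x - c • x := by
      rw [Matrix.add_mulVec, Matrix.smul_mulVec, Matrix.one_mulVec, add_sub_cancel_right]
    rw [hh, hEq, sub_smul]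
  linarith

lemma maxEig_ge_diag (hA : A.IsHermitian) (i : ι) : A i i ≤ maxEig hA := by
  have h := rayleigh_le_max hA (Pi.single i 1)
  have h1 : (Pi.single i 1 : ι → ℝ) ⬝ᵥ (Pi.single i 1) = 1 := by
    simp [dotProduct, Pi.single_apply]
  have h2 : (Pi.single i 1 : ι → ℝ) ⬝ᵥ (A *ᵥ Pi.single i 1) = A i i := by
    simp [dotProduct, Matrix.mulVec, Pi.single_apply]
  rw [h1, h2, mul_one] at h
  exact h

omit [Nonempty ι] in
lemma maxEig_congr {A' : Matrix ι ι ℝ} (h : A = A') (hA : A.IsHermitian)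
    (hA' : A'.IsHermitian) : maxEig hA = maxEig hA' := by subst h; rfl

omit [Nonempty ι] in
lemma minEig_congr {A' : Matrix ι ι ℝ} (h : A = A') (hA : A.IsHermitian)
    (hA' : A'.IsHermitian) : minEig hA = minEig hA' := by subst h; rfl

end CoreSpectral

section BtBSection

set_option linter.unusedSectionVars false

variable {α β : Type*} [Fintype α] [DecidableEq α] [Fintype β] [DecidableEq β]
  [Nonempty α] [Nonempty β] (B : Matrix α β ℝ)

lemma BBt_isHermitian : (B * Bᵀ).IsHermitian :=
  Matrix.isHermitian_mul_conjTranspose_self B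

lemma BtB_isHermitian : (Bᵀ * B).IsHermitian :=
  Matrix.isHermitian_conjTranspose_mul_self B

lemma dot_BtB_nonneg (x : β → ℝ) : 0 ≤ x ⬝ᵥ ((Bᵀ * B) *ᵥ x) := by
  rw [← Matrix.mulVec_mulVec, Matrix.dotProduct_mulVec, Matrix.vecMul_transpose]
  exact Finset.sum_nonneg fun i _ => mul_self_nonneg ((B *ᵥ x) i)

lemma minEig_BtB_nonneg : 0 ≤ minEig (BtB_isHermitian B) := by
  obtain ⟨x, hx, hEq⟩ := exists_minEig_vec (BtB_isHermitian B)
  have h := dot_BtB_nonneg B x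
  rw [hEq, dotProduct_smul, smul_eq_mul] at h
  have hb := dot_self_pos hx
  nlinarith

lemma maxEig_BtB_le (hpos : 0 < maxEig (BtB_isHermitian B)) :
    maxEig (BtB_isHermitian B) ≤ maxEig (BBt_isHermitian B) := by
  obtain ⟨x, hx, hEq⟩ := exists_maxEig_vec (BtB_isHermitian B)
  have hBx : B *ᵥ x ≠ 0 := by
    intro h0
    have hh : (Bᵀ * B) *ᵥ x = 0 := by
      rw [← Matrix.mulVec_mulVec, h0, Matrix.mulVec_zero]
    rw [hEq] at hh
    rcases smul_eq_zero.mp hh with h | h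
    · exact absurd h (ne_of_gt hpos)
    · exact hx h
  refine eig_le_maxEig (BBt_isHermitian B) hBx ?_
  calc (B * Bᵀ) *ᵥ (B *ᵥ x) = ((B * Bᵀ) * B) *ᵥ x := by rw [Matrix.mulVec_mulVec]
    _ = B *ᵥ ((Bᵀ * B) *ᵥ x) := by rw [Matrix.mulVec_mulVec, Matrix.mul_assoc]
    _ = maxEig (BtB_isHermitian B) • (B *ᵥ x) := by rw [hEq, Matrix.mulVec_smul]

lemma maxEig_BBt_le (hpos : 0 < maxEig (BBt_isHermitian B)) :
    maxEig (BBt_isHermitian B) ≤ maxEig (BtB_isHermitian B) := by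
  obtain ⟨x, hx, hEq⟩ := exists_maxEig_vec (BBt_isHermitian B)
  have hBx : Bᵀ *ᵥ x ≠ 0 := by
    intro h0
    have hh : (B * Bᵀ) *ᵥ x = 0 := by
      rw [← Matrix.mulVec_mulVec, h0, Matrix.mulVec_zero]
    rw [hEq] at hh
    rcases smul_eq_zero.mp hh with h | h
    · exact absurd h (ne_of_gt hpos)
    · exact hx h
  refine eig_le_maxEig (BtB_isHermitian B) hBx ?_
  calc (Bᵀ * B) *ᵥ (Bᵀ *ᵥ x) = ((Bᵀ * B) * Bᵀ) *ᵥ x := by rw [Matrix.mulVec_mulVec]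
    _ = Bᵀ *ᵥ ((B * Bᵀ) *ᵥ x) := by rw [Matrix.mulVec_mulVec, Matrix.mul_assoc]
    _ = maxEig (BBt_isHermitian B) • (Bᵀ *ᵥ x) := by rw [hEq, Matrix.mulVec_smul]

lemma maxEig_BtB_eq (hpos1 : 0 < maxEig (BtB_isHermitian B))
    (hpos2 : 0 < maxEig (BBt_isHermitian B)) :
    maxEig (BtB_isHermitian B) = maxEig (BBt_isHermitian B) :=
  le_antisymm (maxEig_BtB_le B hpos1) (maxEig_BBt_le B hpos2)

lemma exists_kernel_vec (h : Fintype.card α < Fintype.card β) :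
    ∃ x : β → ℝ, x ≠ 0 ∧ B *ᵥ x = 0 := by
  by_contra h0
  push_neg at h0
  have hinj : Function.Injective B.mulVecLin := by
    intro x y hxy
    by_contra hne
    have hh : B *ᵥ (x - y) = 0 := by
      rw [Matrix.mulVec_sub]
      rw [show B.mulVecLin x = B *ᵥ x from rfl, show B.mulVecLin y = B *ᵥ y from rfl] at hxy
      rw [hxy, sub_self]
    exact h0 (x - y) (sub_ne_zero.mpr hne) hh
  have hle := LinearMap.finrank_le_finrank_of_injective hinj
  rw [Module.finrank_fintype_fun_eq_card, Module.finrank_fintype_fun_eq_card] at hle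
  omega

lemma minEig_BtB_eq_zero (h : Fintype.card α < Fintype.card β) :
    minEig (BtB_isHermitian B) = 0 := by
  refine le_antisymm ?_ (minEig_BtB_nonneg B)
  obtain ⟨x, hx, hBx⟩ := exists_kernel_vec B h
  have hh : (Bᵀ * B) *ᵥ x = (0 : ℝ) • x := by
    rw [← Matrix.mulVec_mulVec, hBx, Matrix.mulVec_zero, zero_smul]
  exact minEig_le_eig (BtB_isHermitian B) hx hh

end BtBSection

section GraphLemmas

set_option linter.unusedSectionVars false

lemma adjMat_apply (G : SimpleGraph V) [DecidableRel G.Adj] (u v : V) :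
    adjMat G u v = if G.Adj u v then 1 else 0 := by
  unfold adjMat
  rw [SimpleGraph.adjMatrix_apply]
  congr

lemma adjMat_comm [Fintype V] (G : SimpleGraph V) (u v : V) : adjMat G u v = adjMat G v u := by
  classical
  rw [adjMat_apply, adjMat_apply]
  simp [G.adj_comm]

lemma adjMat_nonneg (G : SimpleGraph V) (u v : V) : 0 ≤ adjMat G u v := by
  classical
  rw [adjMat_apply]
  split <;> norm_num

lemma adjMat_diag_zero (G : SimpleGraph V) (u : V) : adjMat G u u = 0 := by
  classical
  rw [adjMat_apply]
  simp

lemma adjMat_row_sum [Fintype V] (G : SimpleGraph V) (u : V) :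
    ∑ v, adjMat G u v = (deg G u : ℝ) := by
  classical
  unfold deg
  rw [Finset.sum_congr rfl fun v _ => adjMat_apply G u v]
  rw [Finset.sum_boole, SimpleGraph.degree, SimpleGraph.neighborFinset_eq_filter]

lemma deg_eq_natCard [Fintype V] (G : SimpleGraph V) (u : V) :
    deg G u = Nat.card (G.neighborSet u) := by
  letI := Classical.decRel G.Adj
  have h : deg G u = G.degree u := rfl
  rw [h, ← SimpleGraph.card_neighborSet_eq_degree, Nat.card_eq_fintype_card]

lemma degree_eq_deg [Fintype V] (G : SimpleGraph V) [DecidableRel G.Adj] (u : V) :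
    G.degree u = deg G u := by
  rw [deg_eq_natCard, ← SimpleGraph.card_neighborSet_eq_degree, Nat.card_eq_fintype_card]

/-- The vertex-edge incidence matrix of a graph. -/
noncomputable def Bmat [Fintype V] [DecidableEq V] (G : SimpleGraph V) : Matrix V G.edgeSet ℝ :=
  fun v e => if v ∈ (e : Sym2 V) then 1 else 0

lemma deg_eq_card [Fintype V] [DecidableEq V] (G : SimpleGraph V) (u : V) :
    (deg G u : ℕ) = (Finset.univ.filter (fun e : G.edgeSet => u ∈ (e : Sym2 V))).card := by
  classical
  rw [← degree_eq_deg]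
  rw [← SimpleGraph.card_incidenceFinset_eq_degree]
  apply Finset.card_bij (fun (e : Sym2 V) (he : e ∈ G.incidenceFinset u) =>
    (⟨e, (SimpleGraph.mem_incidenceFinset (G := G) (v := u) e).mp he |>.1⟩ : G.edgeSet))
  · intro e he
    simp only [Finset.mem_filter, Finset.mem_univ, true_and]
    exact ((SimpleGraph.mem_incidenceFinset (G := G) (v := u) e).mp he).2
  · intro e1 h1 e2 h2 h
    exact congrArg Subtype.val h
  · intro e he
    simp only [Finset.mem_filter, Finset.mem_univ, true_and] at he
    exact ⟨e, (SimpleGraph.mem_incidenceFinset (G := G) (v := u) _).mpr ⟨e.2, he⟩, rfl⟩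

lemma Bmat_mul_transpose [Fintype V] [DecidableEq V] (G : SimpleGraph V) :
    Bmat G * (Bmat G)ᵀ = signQ G := by
  classical
  ext u v
  rw [Matrix.mul_apply]
  simp only [Bmat, Matrix.transpose_apply]
  rw [Finset.sum_congr rfl (fun e _ => by rw [ite_zero_mul_ite_zero, one_mul])]
  rw [Finset.sum_boole]
  by_cases huv : u = v
  · subst huv
    rw [show (Finset.filter (fun e : G.edgeSet => u ∈ (e : Sym2 V) ∧ u ∈ (e : Sym2 V)) Finset.univ)
        = Finset.filter (fun e : G.edgeSet => u ∈ (e : Sym2 V)) Finset.univ from by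
      apply Finset.filter_congr; intro e _; simp]
    rw [← deg_eq_card]
    simp [signQ, adjMat_apply, Matrix.diagonal_apply_eq]
  · have hQ : signQ G u v = if G.Adj u v then 1 else 0 := by
      simp [signQ, Matrix.diagonal_apply_ne _ huv, adjMat_apply]
    rw [hQ]
    by_cases hadj : G.Adj u v
    · rw [if_pos hadj]
      rw [show (Finset.filter (fun e : G.edgeSet => u ∈ (e : Sym2 V) ∧ v ∈ (e : Sym2 V)) Finset.univ)
          = {(⟨s(u,v), hadj⟩ : G.edgeSet)} from ?_]
      · simp
      · ext e
        simp only [Finset.mem_filter, Finset.mem_univ, true_and, Finset.mem_singleton]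
        constructor
        · rintro ⟨h1, h2⟩
          exact Subtype.ext ((Sym2.mem_and_mem_iff huv).mp ⟨h1, h2⟩)
        · rintro rfl
          constructor <;> simp [Sym2.mem_iff]
    · rw [if_neg hadj]
      rw [show (Finset.filter (fun e : G.edgeSet => u ∈ (e : Sym2 V) ∧ v ∈ (e : Sym2 V)) Finset.univ)
          = (∅ : Finset G.edgeSet) from ?_]
      · simp
      · ext e
        simp only [Finset.mem_filter, Finset.mem_univ, true_and, Finset.notMem_empty, iff_false]
        rintro ⟨h1, h2⟩
        exact hadj (G.adj_of_mem_incidenceSet huv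
          (G.edge_mem_incidenceSet_iff.mpr h1)
          (G.edge_mem_incidenceSet_iff.mpr h2))

lemma transpose_Bmat_mul_Bmat [Fintype V] [DecidableEq V] (G : SimpleGraph V) :
    (Bmat G)ᵀ * Bmat G = adjMat G.lineGraph + (2 : ℝ) • (1 : Matrix G.edgeSet G.edgeSet ℝ) := by
  classical
  ext e f
  rw [Matrix.mul_apply]
  simp only [Bmat, Matrix.transpose_apply]
  rw [Finset.sum_congr rfl (fun v _ => by rw [ite_zero_mul_ite_zero, one_mul]), Finset.sum_boole]
  by_cases hef : e = f
  · subst hef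
    have hL : adjMat G.lineGraph e e = 0 := by
      rw [adjMat_apply]
      simp [SimpleGraph.irrefl]
    rw [Matrix.add_apply, hL, zero_add, Matrix.smul_apply, Matrix.one_apply_eq]
    obtain ⟨s, hs⟩ := e
    induction s using Sym2.ind with
    | _ a b =>
      have hab : a ≠ b := ((SimpleGraph.mem_edgeSet G).mp hs).ne
      rw [show Finset.filter (fun v => v ∈ (s(a,b) : Sym2 V) ∧ v ∈ (s(a,b) : Sym2 V)) Finset.univ
          = ({a, b} : Finset V) from by
        ext v
        simp [Sym2.mem_iff]]
      rw [Finset.card_insert_of_notMem (by simp [hab]), Finset.card_singleton]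
      norm_num
  · have h1 : (1 : Matrix G.edgeSet G.edgeSet ℝ) e f = 0 := Matrix.one_apply_ne hef
    rw [Matrix.add_apply, Matrix.smul_apply, h1, smul_zero, add_zero, adjMat_apply]
    by_cases hshare : ∃ v, v ∈ (e : Sym2 V) ∧ v ∈ (f : Sym2 V)
    · obtain ⟨w, hw1, hw2⟩ := hshare
      have hadj : G.lineGraph.Adj e f := SimpleGraph.lineGraph_adj_iff_exists.mpr ⟨hef, w, hw1, hw2⟩
      rw [if_pos hadj]
      rw [show Finset.filter (fun v => v ∈ (e : Sym2 V) ∧ v ∈ (f : Sym2 V)) Finset.univ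
          = ({w} : Finset V) from by
        ext v
        simp only [Finset.mem_filter, Finset.mem_univ, true_and, Finset.mem_singleton]
        constructor
        · rintro ⟨h1', h2'⟩
          by_contra hvw
          exact hef (Subtype.ext (((Sym2.mem_and_mem_iff hvw).mp ⟨h1', hw1⟩).trans
            ((Sym2.mem_and_mem_iff hvw).mp ⟨h2', hw2⟩).symm))
        · rintro rfl; exact ⟨hw1, hw2⟩]
      simp
    · have hadj : ¬ G.lineGraph.Adj e f := by
        rw [SimpleGraph.lineGraph_adj_iff_exists]
        push_neg
        intro _
        push_neg at hshare
        exact hshare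
      rw [if_neg hadj]
      rw [show Finset.filter (fun v => v ∈ (e : Sym2 V) ∧ v ∈ (f : Sym2 V)) Finset.univ
          = (∅ : Finset V) from by
        ext v
        simp only [Finset.mem_filter, Finset.mem_univ, true_and, Finset.notMem_empty, iff_false]
        push_neg at hshare
        rintro ⟨h1', h2'⟩
        exact hshare v h1' h2']
      simp

variable [Fintype V] [DecidableEq V] (G : SimpleGraph V)

lemma dot_adj (x : V → ℝ) :
    x ⬝ᵥ (adjMat G *ᵥ x) = ∑ u, ∑ v, adjMat G u v * x u * x v := by
  simp only [dotProduct, Matrix.mulVec, dotProduct, Finset.mul_sum]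
  congr 1; ext u; congr 1; ext v; ring

lemma dot_signQ (x : V → ℝ) :
    x ⬝ᵥ (signQ G *ᵥ x) = (∑ v, (deg G v : ℝ) * x v ^ 2) + x ⬝ᵥ (adjMat G *ᵥ x) := by
  rw [signQ, Matrix.add_mulVec, dotProduct_add]
  congr 1
  simp only [dotProduct, Matrix.mulVec_diagonal]
  congr 1; ext v; ring

lemma quad_identity (x : V → ℝ) :
    ∑ u, ∑ v, adjMat G u v * (x u - x v)^2
      = 2 * (∑ v, (deg G v : ℝ) * x v ^ 2) - 2 * (x ⬝ᵥ (adjMat G *ᵥ x)) := by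
  have h1 : ∀ u v, adjMat G u v * (x u - x v)^2
      = adjMat G u v * x u ^ 2 + adjMat G u v * x v ^ 2 - 2 * (adjMat G u v * x u * x v) := by
    intro u v; ring
  simp only [h1, Finset.sum_sub_distrib, Finset.sum_add_distrib]
  rw [dot_adj]
  have hrow : ∀ u, ∑ v, adjMat G u v * x u ^ 2 = (deg G u : ℝ) * x u ^ 2 := by
    intro u
    rw [← Finset.sum_mul, adjMat_row_sum]
  have hcol : ∑ u, ∑ v, adjMat G u v * x v ^ 2 = ∑ v, (deg G v : ℝ) * x v ^ 2 := by
    rw [Finset.sum_comm]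
    apply Finset.sum_congr rfl
    intro v _
    rw [← Finset.sum_mul]
    congr 1
    rw [Finset.sum_congr rfl fun u _ => adjMat_comm G u v, adjMat_row_sum]
  rw [Finset.sum_congr rfl fun u _ => hrow u, hcol]
  rw [show ∑ u : V, ∑ v : V, 2 * (adjMat G u v * x u * x v)
      = 2 * ∑ u : V, ∑ v : V, adjMat G u v * x u * x v from by
    rw [Finset.mul_sum]
    exact Finset.sum_congr rfl fun u _ => (Finset.mul_sum _ _ _).symm]
  ring

lemma adj_quad_le_deg_quad (x : V → ℝ) :
    x ⬝ᵥ (adjMat G *ᵥ x) ≤ ∑ v, (deg G v : ℝ) * x v ^ 2 := by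
  have h := quad_identity G x
  have hnn : 0 ≤ ∑ u, ∑ v, adjMat G u v * (x u - x v)^2 :=
    Finset.sum_nonneg fun u _ => Finset.sum_nonneg fun v _ =>
      mul_nonneg (adjMat_nonneg G u v) (sq_nonneg _)
  linarith

lemma eq_on_adj_of_quad_eq {x : V → ℝ}
    (h : x ⬝ᵥ (adjMat G *ᵥ x) = ∑ v, (deg G v : ℝ) * x v ^ 2) :
    ∀ u v, G.Adj u v → x u = x v := by
  classical
  have h0 : ∑ u, ∑ v, adjMat G u v * (x u - x v)^2 = 0 := by
    rw [quad_identity G x, h]; ring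
  have hterm : ∀ u ∈ Finset.univ, ∑ v, adjMat G u v * (x u - x v)^2 = 0 :=
    (Finset.sum_eq_zero_iff_of_nonneg (fun u _ => Finset.sum_nonneg fun v _ =>
      mul_nonneg (adjMat_nonneg G u v) (sq_nonneg _))).mp h0
  intro u v hadj
  have hv := (Finset.sum_eq_zero_iff_of_nonneg
    (fun v _ => mul_nonneg (adjMat_nonneg G u v) (sq_nonneg _))).mp
    (hterm u (Finset.mem_univ u)) v (Finset.mem_univ v)
  rw [adjMat_apply, if_pos hadj, one_mul, pow_eq_zero_iff (by norm_num), sub_eq_zero] at hv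
  exact hv

lemma abs_dot_adj_le (x : V → ℝ) :
    |x ⬝ᵥ (adjMat G *ᵥ x)| ≤ (fun v => |x v|) ⬝ᵥ (adjMat G *ᵥ (fun v => |x v|)) := by
  rw [dot_adj, dot_adj]
  calc |∑ u, ∑ v, adjMat G u v * x u * x v|
      ≤ ∑ u, |∑ v, adjMat G u v * x u * x v| := Finset.abs_sum_le_sum_abs _ _
    _ ≤ ∑ u, ∑ v, |adjMat G u v * x u * x v| :=
        Finset.sum_le_sum fun u _ => Finset.abs_sum_le_sum_abs _ _
    _ = ∑ u, ∑ v, adjMat G u v * |x u| * |x v| := by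
        apply Finset.sum_congr rfl; intro u _; apply Finset.sum_congr rfl; intro v _
        rw [abs_mul, abs_mul, abs_of_nonneg (adjMat_nonneg G u v)]

lemma connected_constant {G : SimpleGraph V} (hconn : G.Connected) {x : V → ℝ}
    (h : ∀ u v, G.Adj u v → x u = x v) (u v : V) : x u = x v := by
  obtain ⟨w⟩ := hconn.preconnected u v
  induction w with
  | nil => rfl
  | cons hadj _ ih => exact (h _ _ hadj).trans ih

lemma absv_dot_self (x : V → ℝ) : (fun v => |x v|) ⬝ᵥ (fun v => |x v|) = x ⬝ᵥ x := by
  simp [dotProduct, abs_mul_abs_self]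

lemma absv_ne_zero {x : V → ℝ} (hx : x ≠ 0) : (fun v => |x v|) ≠ 0 := by
  obtain ⟨i, hi⟩ := Function.ne_iff.mp hx
  exact Function.ne_iff.mpr ⟨i, by simpa [abs_ne_zero] using hi⟩

end GraphLemmas

section MainLemmas

set_option linter.unusedSectionVars false

variable [Fintype V] [DecidableEq V] [Nonempty V] (G : SimpleGraph V)

lemma maxEig_adj_nonneg : 0 ≤ maxEig (adjMat_isHermitian G) := by
  have h := maxEig_ge_diag (adjMat_isHermitian G) (Classical.arbitrary V)
  rwa [adjMat_diag_zero] at h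

lemma neg_minEig_le_maxEig :
    -minEig (adjMat_isHermitian G) ≤ maxEig (adjMat_isHermitian G) := by
  obtain ⟨y, hy, hEq⟩ := exists_minEig_vec (adjMat_isHermitian G)
  have h1 : y ⬝ᵥ (adjMat G *ᵥ y) = minEig (adjMat_isHermitian G) * (y ⬝ᵥ y) := by
    rw [hEq, dotProduct_smul, smul_eq_mul]
  have h2 := abs_dot_adj_le G y
  have h3 := rayleigh_le_max (adjMat_isHermitian G) (fun v => |y v|)
  rw [absv_dot_self] at h3
  have hpos := dot_self_pos hy
  have h4 : -minEig (adjMat_isHermitian G) * (y ⬝ᵥ y)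
      ≤ maxEig (adjMat_isHermitian G) * (y ⬝ᵥ y) := by
    calc -minEig (adjMat_isHermitian G) * (y ⬝ᵥ y) = -(y ⬝ᵥ (adjMat G *ᵥ y)) := by
          rw [h1]; ring
      _ ≤ |y ⬝ᵥ (adjMat G *ᵥ y)| := neg_le_abs _
      _ ≤ (fun v => |y v|) ⬝ᵥ (adjMat G *ᵥ (fun v => |y v|)) := h2
      _ ≤ maxEig (adjMat_isHermitian G) * (y ⬝ᵥ y) := h3
  exact le_of_mul_le_mul_right h4 hpos

lemma exists_abs_max_vec :
    ∃ x : V → ℝ, x ≠ 0 ∧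
      x ⬝ᵥ (adjMat G *ᵥ x) = maxEig (adjMat_isHermitian G) * (x ⬝ᵥ x) := by
  obtain ⟨y, hy, hEq⟩ := exists_maxEig_vec (adjMat_isHermitian G)
  refine ⟨fun v => |y v|, absv_ne_zero hy, ?_⟩
  have h1 : y ⬝ᵥ (adjMat G *ᵥ y) = maxEig (adjMat_isHermitian G) * (y ⬝ᵥ y) := by
    rw [hEq, dotProduct_smul, smul_eq_mul]
  have h2 := abs_dot_adj_le G y
  have h3 := rayleigh_le_max (adjMat_isHermitian G) (fun v => |y v|)
  rw [absv_dot_self] at h3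
  have h4 : maxEig (adjMat_isHermitian G) * (y ⬝ᵥ y)
      ≤ (fun v => |y v|) ⬝ᵥ (adjMat G *ᵥ (fun v => |y v|)) := by
    calc maxEig (adjMat_isHermitian G) * (y ⬝ᵥ y) = y ⬝ᵥ (adjMat G *ᵥ y) := h1.symm
      _ ≤ |y ⬝ᵥ (adjMat G *ᵥ y)| := le_abs_self _
      _ ≤ _ := h2
  rw [absv_dot_self]
  linarith

lemma two_maxEig_le_q1 :
    2 * maxEig (adjMat_isHermitian G) ≤ maxEig (signQ_isHermitian G) := by
  obtain ⟨x, hx, hray⟩ := exists_abs_max_vec G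
  have hQ := rayleigh_le_max (signQ_isHermitian G) x
  rw [dot_signQ, hray] at hQ
  have hge := adj_quad_le_deg_quad G x
  rw [hray] at hge
  have hpos := dot_self_pos hx
  have : 2 * maxEig (adjMat_isHermitian G) * (x ⬝ᵥ x)
      ≤ maxEig (signQ_isHermitian G) * (x ⬝ᵥ x) := by linarith
  exact le_of_mul_le_mul_right this hpos

lemma key_eq_case (hconn : G.Connected)
    (hq : maxEig (signQ_isHermitian G) = 2 * maxEig (adjMat_isHermitian G))
    {x : V → ℝ} (hx : x ≠ 0)
    (hray : x ⬝ᵥ (adjMat G *ᵥ x) = maxEig (adjMat_isHermitian G) * (x ⬝ᵥ x)) :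
    (∀ u v, x u = x v) ∧ (∀ u, (deg G u : ℝ) = maxEig (adjMat_isHermitian G)) := by
  have heig := eigvec_of_rayleigh_eq_max (adjMat_isHermitian G) hray
  have hQx := rayleigh_le_max (signQ_isHermitian G) x
  rw [dot_signQ, hray, hq] at hQx
  have hge := adj_quad_le_deg_quad G x
  have heqq : x ⬝ᵥ (adjMat G *ᵥ x) = ∑ v, (deg G v : ℝ) * x v ^ 2 := by
    rw [hray]; linarith
  have hconst0 := eq_on_adj_of_quad_eq G heqq
  have hconst := connected_constant hconn hconst0
  obtain ⟨i0, hi0⟩ := Function.ne_iff.mp hx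
  refine ⟨hconst, fun u => ?_⟩
  have hxu : x u ≠ 0 := by rw [hconst u i0]; exact hi0
  have heq_u := congrFun heig u
  have hmv : (adjMat G *ᵥ x) u = (deg G u : ℝ) * x u := by
    show (adjMat G u) ⬝ᵥ x = _
    rw [dotProduct]
    rw [Finset.sum_congr rfl (fun v _ => by rw [hconst v u])]
    rw [← Finset.sum_mul, adjMat_row_sum]
  rw [hmv] at heq_u
  have : (deg G u : ℝ) * x u = maxEig (adjMat_isHermitian G) * x u := heq_u
  exact mul_right_cancel₀ hxu this

lemma exists_deg_pos [Nonempty G.edgeSet] : ∃ a : V, 1 ≤ (deg G a : ℝ) := by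
  obtain ⟨⟨s, hs⟩⟩ := (inferInstance : Nonempty G.edgeSet)
  induction s using Sym2.ind with
  | _ a b =>
    refine ⟨a, ?_⟩
    have hadj : G.Adj a b := (SimpleGraph.mem_edgeSet G).mp hs
    have h1 : 0 < deg G a := by
      rw [deg_eq_natCard]
      have : b ∈ G.neighborSet a := hadj
      have hne : Nonempty (G.neighborSet a) := ⟨⟨b, this⟩⟩
      exact Nat.card_pos
    exact_mod_cast h1

lemma q1_pos [Nonempty G.edgeSet] : 0 < maxEig (signQ_isHermitian G) := by
  obtain ⟨a, ha⟩ := exists_deg_pos G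
  have h := maxEig_ge_diag (signQ_isHermitian G) a
  have hd : signQ G a a = (deg G a : ℝ) := by
    simp [signQ, Matrix.diagonal_apply_eq, adjMat_diag_zero]
  rw [hd] at h
  linarith

lemma sprd_lineGraph_eq [Nonempty G.edgeSet]
    (hcard : Fintype.card V < Fintype.card G.edgeSet) :
    sprd (adjMat_isHermitian G.lineGraph) = maxEig (signQ_isHermitian G) := by
  classical
  set B := Bmat G with hB
  have hM : ((B)ᵀ * B).IsHermitian := BtB_isHermitian B
  have h2 : (B)ᵀ * B = adjMat G.lineGraph + (2 : ℝ) • (1 : Matrix G.edgeSet G.edgeSet ℝ) :=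
    transpose_Bmat_mul_Bmat G
  have hBH : (adjMat G.lineGraph + (2 : ℝ) • (1 : Matrix G.edgeSet G.edgeSet ℝ)).IsHermitian :=
    h2 ▸ hM
  have hmaxM : maxEig hM = maxEig (adjMat_isHermitian G.lineGraph) + 2 := by
    rw [maxEig_congr h2 hM hBH]
    exact maxEig_shift (adjMat_isHermitian G.lineGraph) 2 hBH
  have hminM : minEig hM = minEig (adjMat_isHermitian G.lineGraph) + 2 := by
    rw [minEig_congr h2 hM hBH]
    exact minEig_shift (adjMat_isHermitian G.lineGraph) 2 hBH
  have hmin0 : minEig hM = 0 := minEig_BtB_eq_zero B hcard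
  have hposBtB : 0 < maxEig hM := by
    have h := maxEig_ge_diag hM (Classical.arbitrary G.edgeSet)
    have hdiag : ((B)ᵀ * B) (Classical.arbitrary G.edgeSet) (Classical.arbitrary G.edgeSet) = 2 := by
      rw [h2]
      simp [Matrix.add_apply, adjMat_diag_zero, Matrix.smul_apply, Matrix.one_apply_eq]
    rw [hdiag] at h
    linarith
  have hQmax : maxEig hM = maxEig (signQ_isHermitian G) := by
    have hposBBt : 0 < maxEig (BBt_isHermitian B) := by
      rw [maxEig_congr (Bmat_mul_transpose G) (BBt_isHermitian B) (signQ_isHermitian G)]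
      exact q1_pos G
    have := maxEig_BtB_eq B hposBtB hposBBt
    rw [this, maxEig_congr (Bmat_mul_transpose G) (BBt_isHermitian B) (signQ_isHermitian G)]
  rw [sprd]
  have hmaxL : maxEig (adjMat_isHermitian G.lineGraph) = maxEig (signQ_isHermitian G) - 2 := by
    rw [← hQmax, hmaxM]; ring
  have hminL : minEig (adjMat_isHermitian G.lineGraph) = -2 := by
    rw [hmin0] at hminM; linarith
  rw [hmaxL, hminL]
  ring

lemma reg_maxEig {r : ℕ} (hreg : IsReg G r) :
    maxEig (adjMat_isHermitian G) = r := by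
  have hone : (fun _ : V => (1:ℝ)) ≠ 0 :=
    Function.ne_iff.mpr ⟨Classical.arbitrary V, one_ne_zero⟩
  have hvec : adjMat G *ᵥ (fun _ => (1:ℝ)) = (r : ℝ) • (fun _ => (1:ℝ)) := by
    funext u
    show (adjMat G u) ⬝ᵥ (fun _ => (1:ℝ)) = _
    rw [dotProduct]
    simp only [mul_one]
    rw [adjMat_row_sum, hreg u]
    simp
  have hge : (r : ℝ) ≤ maxEig (adjMat_isHermitian G) :=
    eig_le_maxEig (adjMat_isHermitian G) hone hvec
  have hle : maxEig (adjMat_isHermitian G) ≤ r := by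
    obtain ⟨x, hx, hray⟩ := exists_abs_max_vec G
    have hge2 := adj_quad_le_deg_quad G x
    rw [hray] at hge2
    have hdeg : ∑ v, (deg G v : ℝ) * x v ^ 2 = (r:ℝ) * (x ⬝ᵥ x) := by
      rw [Finset.sum_congr rfl (fun v _ => by rw [hreg v])]
      rw [← Finset.mul_sum]
      congr 1
      simp [dotProduct, sq]
    rw [hdeg] at hge2
    exact le_of_mul_le_mul_right hge2 (dot_self_pos hx)
  linarith

lemma reg_q1 {r : ℕ} (hreg : IsReg G r) :
    maxEig (signQ_isHermitian G) = 2 * r := by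
  have hone : (fun _ : V => (1:ℝ)) ≠ 0 :=
    Function.ne_iff.mpr ⟨Classical.arbitrary V, one_ne_zero⟩
  have hvec : signQ G *ᵥ (fun _ => (1:ℝ)) = (2 * r : ℝ) • (fun _ => (1:ℝ)) := by
    funext u
    rw [signQ, Matrix.add_mulVec]
    show (Matrix.diagonal (fun v => (deg G v : ℝ)) *ᵥ _) u + (adjMat G u) ⬝ᵥ _ = _
    rw [Matrix.mulVec_diagonal, dotProduct]
    simp only [mul_one]
    rw [adjMat_row_sum, hreg u]
    simp
    try ring
  have hge : (2 * r : ℝ) ≤ maxEig (signQ_isHermitian G) :=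
    eig_le_maxEig (signQ_isHermitian G) hone hvec
  have hle : maxEig (signQ_isHermitian G) ≤ 2 * r := by
    obtain ⟨z, hz, hEq⟩ := exists_maxEig_vec (signQ_isHermitian G)
    have h1 : z ⬝ᵥ (signQ G *ᵥ z) = maxEig (signQ_isHermitian G) * (z ⬝ᵥ z) := by
      rw [hEq, dotProduct_smul, smul_eq_mul]
    have hdeg : ∀ y : V → ℝ, ∑ v, (deg G v : ℝ) * y v ^ 2 = (r:ℝ) * (y ⬝ᵥ y) := by
      intro y
      rw [Finset.sum_congr rfl (fun v _ => by rw [hreg v])]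
      rw [← Finset.mul_sum]
      congr 1
      simp [dotProduct, sq]
    have h2 := abs_dot_adj_le G z
    have h3 := adj_quad_le_deg_quad G (fun v => |z v|)
    rw [hdeg, absv_dot_self] at h3
    have h4 := dot_signQ G z
    rw [hdeg] at h4
    have h5 : z ⬝ᵥ (adjMat G *ᵥ z) ≤ (r:ℝ) * (z ⬝ᵥ z) := le_trans (le_trans (le_abs_self _) h2) h3
    have hpos := dot_self_pos hz
    have : maxEig (signQ_isHermitian G) * (z ⬝ᵥ z) ≤ (2 * r : ℝ) * (z ⬝ᵥ z) := by
      rw [← h1]; linarith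
    exact le_of_mul_le_mul_right this hpos
  linarith

lemma bipartite_minEig {r : ℕ} (hreg : IsReg G r) (hcol : G.Colorable 2) :
    minEig (adjMat_isHermitian G) = -r := by
  classical
  obtain ⟨C⟩ := hcol
  set z : V → ℝ := fun v => if C v = 0 then 1 else -1 with hz
  have hz_ne : z ≠ 0 := by
    refine Function.ne_iff.mpr ⟨Classical.arbitrary V, ?_⟩
    by_cases h : C (Classical.arbitrary V) = 0 <;> simp [hz, h]
  have hz_opp : ∀ u v, G.Adj u v → z v = -z u := by
    intro u v hadj
    have hne : C u ≠ C v := C.valid hadj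
    have h2 : ∀ a : Fin 2, a = 0 ∨ a = 1 := by decide
    rcases h2 (C u) with hu | hu <;> rcases h2 (C v) with hv | hv <;>
      simp [hz, hu, hv] at hne ⊢ <;> simp [hu, hv]
  have hvec : adjMat G *ᵥ z = (-(r:ℝ)) • z := by
    classical
    funext u
    show (adjMat G u) ⬝ᵥ z = _
    rw [dotProduct]
    have hterm : ∀ v, adjMat G u v * z v = adjMat G u v * (-z u) := by
      intro v
      by_cases hadj : G.Adj u v
      · rw [hz_opp u v hadj]
      · rw [adjMat_apply, if_neg hadj, zero_mul, zero_mul]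
    rw [Finset.sum_congr rfl (fun v _ => hterm v), ← Finset.sum_mul, adjMat_row_sum, hreg u]
    simp
    try ring
  have hle : minEig (adjMat_isHermitian G) ≤ -(r:ℝ) :=
    minEig_le_eig (adjMat_isHermitian G) hz_ne hvec
  have hge : -(r:ℝ) ≤ minEig (adjMat_isHermitian G) := by
    have h1 := neg_minEig_le_maxEig G
    rw [reg_maxEig G hreg] at h1
    linarith
  linarith

end MainLemmas

/-- for a connected `(n,m)` graph with `m > n ≥ 4`, `S(G) ≤ S_L(G)`,
with equality iff `G` is regular and bipartite. -/
theorem spread_le_lineGraph_spread {V : Type*} [Fintype V] [DecidableEq V]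
    (G : SimpleGraph V) (hconn : G.Connected) (hn : 4 ≤ Fintype.card V)
    (hmn : Fintype.card V < numEdges G) :
    sprd (adjMat_isHermitian G) ≤ sprd (adjMat_isHermitian G.lineGraph) ∧
    (sprd (adjMat_isHermitian G) = sprd (adjMat_isHermitian G.lineGraph) ↔
      (∃ r, IsReg G r) ∧ G.Colorable 2) := by
  classical
  have hnV : Nonempty V := Fintype.card_pos_iff.mp (by omega)
  have hnum : numEdges G = Fintype.card G.edgeSet := Nat.card_eq_fintype_card
  have hcard : Fintype.card V < Fintype.card G.edgeSet := by omega
  have hneE : Nonempty G.edgeSet := Fintype.card_pos_iff.mp (by omega)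
  have hline := sprd_lineGraph_eq G hcard
  have h1 : -minEig (adjMat_isHermitian G) ≤ maxEig (adjMat_isHermitian G) :=
    neg_minEig_le_maxEig G
  have h2 : 2 * maxEig (adjMat_isHermitian G) ≤ maxEig (signQ_isHermitian G) :=
    two_maxEig_le_q1 G
  have hsprdA : sprd (adjMat_isHermitian G)
      = maxEig (adjMat_isHermitian G) - minEig (adjMat_isHermitian G) := rfl
  constructor
  · rw [hline, hsprdA]
    linarith
  constructor
  · intro heq
    rw [hline, hsprdA] at heq
    have heq1 : -minEig (adjMat_isHermitian G) = maxEig (adjMat_isHermitian G) := by linarith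
    have heq2 : maxEig (signQ_isHermitian G) = 2 * maxEig (adjMat_isHermitian G) := by linarith
    obtain ⟨x, hx, hray⟩ := exists_abs_max_vec G
    obtain ⟨hconstx, hdeg⟩ := key_eq_case G hconn heq2 hx hray
    refine ⟨⟨deg G (Classical.arbitrary V), fun v => ?_⟩, ?_⟩
    · have ha := hdeg v
      have hb := hdeg (Classical.arbitrary V)
      exact_mod_cast ha.trans hb.symm
    · -- build a 2-coloring from a minimal eigenvector
      obtain ⟨yn, hyn, hEqn⟩ := exists_minEig_vec (adjMat_isHermitian G)
      have hy_ray : yn ⬝ᵥ (adjMat G *ᵥ yn) = minEig (adjMat_isHermitian G) * (yn ⬝ᵥ yn) := by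
        rw [hEqn, dotProduct_smul, smul_eq_mul]
      have hx'ne : (fun v => |yn v|) ≠ 0 := absv_ne_zero hyn
      have hb1 := abs_dot_adj_le G yn
      have hb2 := rayleigh_le_max (adjMat_isHermitian G) (fun v => |yn v|)
      rw [absv_dot_self] at hb2
      have hraw : (fun v => |yn v|) ⬝ᵥ (adjMat G *ᵥ (fun v => |yn v|))
          = maxEig (adjMat_isHermitian G) * ((fun v => |yn v|) ⬝ᵥ (fun v => |yn v|)) := by
        have hlow : maxEig (adjMat_isHermitian G) * (yn ⬝ᵥ yn)
            ≤ (fun v => |yn v|) ⬝ᵥ (adjMat G *ᵥ (fun v => |yn v|)) := by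
          calc maxEig (adjMat_isHermitian G) * (yn ⬝ᵥ yn)
              = -(yn ⬝ᵥ (adjMat G *ᵥ yn)) := by rw [hy_ray, ← heq1]; ring
            _ ≤ |yn ⬝ᵥ (adjMat G *ᵥ yn)| := neg_le_abs _
            _ ≤ _ := hb1
        rw [absv_dot_self]
        linarith
      obtain ⟨hconst', _⟩ := key_eq_case G hconn heq2 hx'ne hraw
      obtain ⟨i0, hi0⟩ := Function.ne_iff.mp hyn
      have hynne : ∀ v, yn v ≠ 0 := by
        intro v h0
        have hc := hconst' v i0
        simp only [h0, abs_zero] at hc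
        exact hi0 (abs_eq_zero.mp hc.symm)
      have hsum : ∑ u, ∑ v, (adjMat G u v * yn u * yn v
          + adjMat G u v * |yn u| * |yn v|) = 0 := by
        rw [Finset.sum_congr rfl (fun u (_ : u ∈ Finset.univ) => Finset.sum_add_distrib),
          Finset.sum_add_distrib, ← dot_adj, ← dot_adj G (fun v => |yn v|), hy_ray, hraw,
          absv_dot_self, ← heq1]
        ring
      have hterm : ∀ u v, adjMat G u v * yn u * yn v + adjMat G u v * |yn u| * |yn v| = 0 := by
        have hnn : ∀ u v, 0 ≤ adjMat G u v * yn u * yn v + adjMat G u v * |yn u| * |yn v| := by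
          intro u v
          have hq1' : adjMat G u v * yn u * yn v + adjMat G u v * |yn u| * |yn v|
              = adjMat G u v * (yn u * yn v + |yn u * yn v|) := by
            rw [abs_mul]; ring
          rw [hq1']
          exact mul_nonneg (adjMat_nonneg G u v) (by linarith [neg_abs_le (yn u * yn v)])
        intro u v
        have houter := (Finset.sum_eq_zero_iff_of_nonneg (fun u (_ : u ∈ Finset.univ) =>
          Finset.sum_nonneg (fun v (_ : v ∈ Finset.univ) => hnn u v))).mp hsum u (Finset.mem_univ u)
        exact (Finset.sum_eq_zero_iff_of_nonneg (fun v (_ : v ∈ Finset.univ) => hnn u v)).mp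
          houter v (Finset.mem_univ v)
      have hsign : ∀ u v, G.Adj u v → yn u * yn v < 0 := by
        intro u v hadj
        have ht := hterm u v
        rw [adjMat_apply, if_pos hadj, one_mul, one_mul] at ht
        have habs : |yn u| * |yn v| > 0 :=
          mul_pos (abs_pos.mpr (hynne u)) (abs_pos.mpr (hynne v))
        nlinarith
      refine ⟨SimpleGraph.Coloring.mk (fun v => if 0 < yn v then (0 : Fin 2) else 1) ?_⟩
      intro u v hadj
      have hs := hsign u v hadj
      by_cases hu : 0 < yn u
      · have hv : ¬ (0 < yn v) := by nlinarith
        simp [hu, hv]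
      · have hu' : yn u < 0 := lt_of_le_of_ne (not_lt.mp hu) (hynne u)
        have hv : 0 < yn v := by nlinarith
        simp [hu, hv]
  · rintro ⟨⟨r, hreg⟩, hcol⟩
    have hl1 := reg_maxEig G hreg
    have hq := reg_q1 G hreg
    have hln := bipartite_minEig G hreg hcol
    rw [hline, hsprdA, hl1, hln, hq]
    ring

end SpreadPaper
end
end

section
/- Suppose a symmetric n×n real matrix M is partitioned into blocks M_{ij} (1 ≤ i, j ≤ k) with M_{ij} = M_{ji}ᵀ, and let M̄ be the k×k quotient matrix whose (i,j)-entry is the average row sum of the block M_{ij}. Then the eigenvalues of M̄ interlace the eigenvalues of M; moreover, if the partition is equitable (each block has constant row sums), then every eigenvalue of M̄ is an eigenvalue of M. -/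
open Matrix Polynomial BigOperators

noncomputable section

namespace SpreadPaper

variable {V : Type*}

lemma eig_data {V : Type*} [Fintype V] [DecidableEq V] {A : Matrix V V ℝ} (hA : A.IsHermitian) :
    ∃ v : V → V → ℝ, (∀ t, A *ᵥ v t = hA.eigenvalues t • v t) ∧
      (∀ t s, v t ⬝ᵥ v s = if t = s then 1 else 0) ∧
      (∀ x y : V → ℝ, x ⬝ᵥ y = ∑ t, (v t ⬝ᵥ x) * (v t ⬝ᵥ y)) := by
  have hU : ∀ i j, (hA.eigenvectorUnitary : Matrix V V ℝ) i j = hA.eigenvectorBasis j i :=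
    fun i j => hA.eigenvectorUnitary_apply i j
  refine ⟨fun t => ⇑(hA.eigenvectorBasis t), fun t => ?_, fun t s => ?_, fun x y => ?_⟩
  · simpa using hA.mulVec_eigenvectorBasis t
  · have h1 := congrFun (congrFun (Unitary.coe_star_mul_self hA.eigenvectorUnitary) t) s
    simp only [Matrix.mul_apply, Matrix.star_apply, Matrix.one_apply, star_trivial, Unitary.coe_star, hU] at h1
    simpa [dotProduct] using h1
  · have hsU : ∀ z : V → ℝ, (star (hA.eigenvectorUnitary : Matrix V V ℝ)) *ᵥ z
        = fun t => ⇑(hA.eigenvectorBasis t) ⬝ᵥ z := by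
      intro z; funext t
      show ∑ i, star ((hA.eigenvectorUnitary : Matrix V V ℝ)) t i * z i = _
      simp only [Matrix.star_apply, star_trivial, hU, dotProduct]
    have hT : (star (hA.eigenvectorUnitary : Matrix V V ℝ))ᵀ
        = (hA.eigenvectorUnitary : Matrix V V ℝ) := by
      ext i j; simp [Matrix.star_apply]
    have hUU : (hA.eigenvectorUnitary : Matrix V V ℝ)
        * star (hA.eigenvectorUnitary : Matrix V V ℝ) = 1 := by
      simpa [Unitary.coe_star] using Unitary.coe_mul_star_self hA.eigenvectorUnitary
    have h2 : ((star (hA.eigenvectorUnitary : Matrix V V ℝ)) *ᵥ x) ⬝ᵥ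
        ((star (hA.eigenvectorUnitary : Matrix V V ℝ)) *ᵥ y) = x ⬝ᵥ y := by
      calc ((star (hA.eigenvectorUnitary : Matrix V V ℝ)) *ᵥ x) ⬝ᵥ
            ((star (hA.eigenvectorUnitary : Matrix V V ℝ)) *ᵥ y)
          = (((star (hA.eigenvectorUnitary : Matrix V V ℝ)) *ᵥ x) ᵥ*
              (star (hA.eigenvectorUnitary : Matrix V V ℝ))) ⬝ᵥ y :=
            Matrix.dotProduct_mulVec _ _ _
        _ = ((star (hA.eigenvectorUnitary : Matrix V V ℝ))ᵀ *ᵥ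
              ((star (hA.eigenvectorUnitary : Matrix V V ℝ)) *ᵥ x)) ⬝ᵥ y := by
            rw [Matrix.mulVec_transpose]
        _ = (((star (hA.eigenvectorUnitary : Matrix V V ℝ))ᵀ *
              (star (hA.eigenvectorUnitary : Matrix V V ℝ))) *ᵥ x) ⬝ᵥ y := by
            rw [Matrix.mulVec_mulVec]
        _ = x ⬝ᵥ y := by rw [hT, hUU, Matrix.one_mulVec]
    rw [← h2, hsU]
    rfl

lemma charpoly_similar {n : Type*} [Fintype n] [DecidableEq n] {R : Type*} [CommRing R]
    (P Q A : Matrix n n R) (h : P * Q = 1) : (P * A * Q).charpoly = A.charpoly := by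
  have hmap : ∀ M : Matrix n n R, (C : R →+* R[X]).mapMatrix M = M.map C := fun M => rfl
  have hPQ : P.map (C : R → R[X]) * Q.map C = 1 := by
    rw [← Matrix.map_mul, h, Matrix.map_one _ (map_zero C) (map_one C)]
  have hscal : Matrix.scalar n (X : R[X]) = (X : R[X]) • (1 : Matrix n n R[X]) := by
    ext i j
    simp [Matrix.scalar_apply, Matrix.one_apply, Matrix.diagonal_apply]
  have hchar : (P * A * Q).charmatrix = P.map C * A.charmatrix * Q.map C := by
    rw [Matrix.charmatrix, Matrix.charmatrix]
    rw [Matrix.mul_sub, Matrix.sub_mul]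
    congr 1
    · rw [hscal, mul_smul_comm, smul_mul_assoc, Matrix.mul_one, hPQ]
    · simp only [hmap, Matrix.map_mul]
  rw [Matrix.charpoly, Matrix.charpoly, hchar, Matrix.det_mul, Matrix.det_mul]
  rw [mul_right_comm, ← Matrix.det_mul, hPQ, Matrix.det_one, one_mul]

lemma charpoly_diagonal {n : Type*} [Fintype n] [DecidableEq n] {R : Type*} [CommRing R]
    (d : n → R) : (Matrix.diagonal d).charpoly = ∏ i, (X - C (d i)) := by
  have : (Matrix.diagonal d).charmatrix = Matrix.diagonal (fun i => X - C (d i)) := by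
    apply Matrix.ext; intro i j
    by_cases h : i = j
    · subst h; rw [Matrix.charmatrix_apply_eq, Matrix.diagonal_apply_eq (fun i => X - C (d i)) i, Matrix.diagonal_apply_eq d i]
    · rw [Matrix.charmatrix_apply_ne _ _ _ h, Matrix.diagonal_apply_ne _ h,
        Matrix.diagonal_apply_ne _ h, map_zero, neg_zero]
  rw [Matrix.charpoly, this, Matrix.det_diagonal]

lemma hermitian_charpoly {n : Type*} [Fintype n] [DecidableEq n] {A : Matrix n n ℝ}
    (hA : A.IsHermitian) : A.charpoly = ∏ i, (X - C (hA.eigenvalues i)) := by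
  have hspec := hA.spectral_theorem
  have hdiag : Matrix.diagonal ((RCLike.ofReal : ℝ → ℝ) ∘ hA.eigenvalues)
      = Matrix.diagonal hA.eigenvalues := by
    congr 1
  have hUU : (hA.eigenvectorUnitary : Matrix n n ℝ)
      * star (hA.eigenvectorUnitary : Matrix n n ℝ) = 1 := by
    simpa [Unitary.coe_star] using Unitary.coe_mul_star_self hA.eigenvectorUnitary
  rw [congrArg Matrix.charpoly hspec, Unitary.conjStarAlgAut_apply, hdiag, charpoly_similar _ _ _ hUU, charpoly_diagonal]

lemma antitone_sorted_ofFn {k : ℕ} {f : Fin k → ℝ} (hf : Antitone f) :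
    (List.ofFn f).Pairwise (fun a b => b ≤ a) := by
  rw [List.pairwise_ofFn]
  intro i j hij
  exact hf hij.le

lemma antitone_eq_of_perm {k : ℕ} {f g : Fin k → ℝ} (hf : Antitone f) (hg : Antitone g)
    (h : Multiset.map f Finset.univ.val = Multiset.map g Finset.univ.val) : f = g := by
  have hof : ∀ u : Fin k → ℝ, Multiset.map u Finset.univ.val = ↑(List.ofFn u) := by
    intro u
    rw [Fin.univ_def, List.ofFn_eq_map, ← Multiset.map_coe]
  rw [hof, hof, Multiset.coe_eq_coe] at h
  have := List.Perm.eq_of_pairwise (le := fun a b : ℝ => b ≤ a)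
    (fun a b _ _ h1 h2 => le_antisymm h2 h1) (antitone_sorted_ofFn hf) (antitone_sorted_ofFn hg) h
  exact List.ofFn_inj.mp this

lemma exists_perm_of_prod_eq {k : ℕ} (b ν : Fin k → ℝ) (hb : Antitone b)
    (h : ∏ i, (X - C (b i)) = ∏ i, (X - C (ν i))) :
    ∃ ε : Equiv.Perm (Fin k), ∀ i, b i = ν (ε i) := by
  have hprod : ∀ u : Fin k → ℝ, ∏ i, (X - C (u i)) =
      (Multiset.map (fun a => X - C a) (Multiset.map u Finset.univ.val)).prod := by
    intro u
    rw [Multiset.map_map, Finset.prod_eq_multiset_prod]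
    rfl
  rw [hprod, hprod] at h
  have hmul : Multiset.map b Finset.univ.val = Multiset.map ν Finset.univ.val := by
    have := congrArg Polynomial.roots h
    rwa [Polynomial.roots_multiset_prod_X_sub_C, Polynomial.roots_multiset_prod_X_sub_C] at this
  set σ := Tuple.sort ν with hσ
  set ε : Equiv.Perm (Fin k) := Fin.revPerm.trans σ with hε
  have hν' : Antitone (fun i => ν (ε i)) := by
    intro i j hij
    have hmono := Tuple.monotone_sort ν
    have : (Fin.revPerm (n := k)) j ≤ Fin.revPerm i := by
      simp [Fin.rev_le_rev, hij]
    simpa [hε] using hmono this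
  have hperm : ∀ π : Equiv.Perm (Fin k), Multiset.map (⇑π) Finset.univ.val = Finset.univ.val := by
    intro π
    have := Finset.map_univ_equiv π
    calc Multiset.map (⇑π) Finset.univ.val = (Finset.map π.toEmbedding Finset.univ).val := rfl
      _ = Finset.univ.val := by rw [this]
  have hmul2 : Multiset.map b Finset.univ.val
      = Multiset.map (fun i => ν (ε i)) Finset.univ.val := by
    rw [hmul]
    calc Multiset.map ν Finset.univ.val
        = Multiset.map ν (Multiset.map (⇑ε) Finset.univ.val) := by rw [hperm ε]
      _ = Multiset.map (fun i => ν (ε i)) Finset.univ.val := by rw [Multiset.map_map]; rfl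
  exact ⟨ε, fun i => congrFun (antitone_eq_of_perm hb hν' hmul2) i⟩

section helpers
variable {ι κ : Type*} [Fintype ι] [Fintype κ]

lemma dotProduct_sum' (u : κ → ℝ) (f : ι → κ → ℝ) :
    u ⬝ᵥ (∑ l, f l) = ∑ l, u ⬝ᵥ f l := by
  simp only [dotProduct, Finset.sum_apply, Finset.mul_sum]
  rw [Finset.sum_comm]

lemma sum_dotProduct' (u : κ → ℝ) (f : ι → κ → ℝ) :
    (∑ l, f l) ⬝ᵥ u = ∑ l, f l ⬝ᵥ u := by
  simp only [dotProduct, Finset.sum_apply, Finset.sum_mul]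
  rw [Finset.sum_comm]

lemma mulVec_sum' {m : Type*} [Fintype m] (A : Matrix m κ ℝ) (f : ι → κ → ℝ) :
    A *ᵥ (∑ l, f l) = ∑ l, A *ᵥ f l := by
  funext r
  simp only [Matrix.mulVec, Finset.sum_apply, dotProduct, Finset.mul_sum]
  rw [Finset.sum_comm]

end helpers

lemma core {V : Type*} [Fintype V] [DecidableEq V] {k : ℕ}
    (M : Matrix V V ℝ) (hMt : Mᵀ = M)
    (v : V → V → ℝ) (μ : V → ℝ)
    (hv : ∀ t, M *ᵥ v t = μ t • v t)
    (hpar : ∀ x y : V → ℝ, x ⬝ᵥ y = ∑ t, (v t ⬝ᵥ x) * (v t ⬝ᵥ y))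
    (S : Matrix V (Fin k) ℝ) (hS : Sᵀ * S = 1)
    (w : Fin k → Fin k → ℝ) (ν : Fin k → ℝ)
    (hw : ∀ t, (Sᵀ * M * S) *ᵥ w t = ν t • w t)
    (hwo : ∀ t s, w t ⬝ᵥ w s = if t = s then 1 else 0)
    (a : Fin (Fintype.card V) → ℝ) (e : Fin (Fintype.card V) ≃ V)
    (hamono : Antitone a) (hae : ∀ j, a j = μ (e j))
    (b : Fin k → ℝ) (ε : Equiv.Perm (Fin k))
    (hbmono : Antitone b) (hbe : ∀ j, b j = ν (ε j))
    (hk : k ≤ Fintype.card V) (i : Fin k) :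
    b i ≤ a ⟨i, lt_of_lt_of_le i.2 hk⟩ := by
  have hi0k : (i : ℕ) < k := i.2
  have hi0N : (i : ℕ) < Fintype.card V := lt_of_lt_of_le hi0k hk
  set i' : Fin (Fintype.card V) := ⟨i, hi0N⟩ with hi'
  let el : Fin ((i : ℕ)+1) → Fin k := fun l => ⟨l, by omega⟩
  let er : Fin (i : ℕ) → Fin (Fintype.card V) := fun r => ⟨r, by omega⟩
  let Amat : Matrix (Fin (i : ℕ)) (Fin ((i : ℕ)+1)) ℝ :=
    Matrix.of fun r l => v (e (er r)) ⬝ᵥ (S *ᵥ w (ε (el l)))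
  obtain ⟨c, hc0, hcA⟩ : ∃ c : Fin ((i : ℕ)+1) → ℝ, c ≠ 0 ∧ Amat *ᵥ c = 0 := by
    have hni : ¬ Function.Injective Amat.mulVecLin := by
      intro hinj
      have h1 := LinearMap.finrank_le_finrank_of_injective hinj
      rw [Module.finrank_fintype_fun_eq_card, Module.finrank_fintype_fun_eq_card] at h1
      simp only [Fintype.card_fin] at h1
      omega
    rw [Function.not_injective_iff] at hni
    obtain ⟨c1, c2, heq, hne⟩ := hni
    refine ⟨c1 - c2, sub_ne_zero.mpr hne, ?_⟩
    have h2 : Amat.mulVecLin (c1 - c2) = 0 := by rw [map_sub, heq, sub_self]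
    simpa [Matrix.mulVecLin_apply] using h2
  set s : Fin k → ℝ := ∑ l, c l • w (ε (el l)) with hs
  have hinj : Function.Injective (fun l : Fin ((i : ℕ)+1) => ε (el l)) := by
    intro l l' h
    have h2 := ε.injective h
    have : (l : ℕ) = (l' : ℕ) := congrArg (fun z : Fin k => (z : ℕ)) h2
    exact Fin.ext this
  have hws : ∀ l, w (ε (el l)) ⬝ᵥ s = c l := by
    intro l
    rw [hs, dotProduct_sum']
    have h3 : ∀ l', w (ε (el l)) ⬝ᵥ (c l' • w (ε (el l'))) = if l' = l then c l' else 0 := by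
      intro l'
      rw [dotProduct_smul, hwo]
      by_cases h : l' = l
      · subst h; simp
      · have hne2 : ε (el l) ≠ ε (el l') := fun hh => h (hinj hh).symm
        simp [hne2, h]
    simp_rw [h3]
    simp
  have hss : s ⬝ᵥ s = ∑ l, c l * c l := by
    rw [hs, sum_dotProduct']
    congr 1; funext l
    rw [smul_dotProduct, ← hs, hws l, smul_eq_mul]
  have hspos : 0 < s ⬝ᵥ s := by
    rw [hss]
    obtain ⟨l, hl⟩ := Function.ne_iff.mp hc0
    exact Finset.sum_pos' (fun l' _ => mul_self_nonneg _)
      ⟨l, Finset.mem_univ l, mul_self_pos.mpr hl⟩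
  set x : V → ℝ := S *ᵥ s with hx
  have hxs : ∀ y : Fin k → ℝ, x ⬝ᵥ (S *ᵥ y) = s ⬝ᵥ y := by
    intro y
    rw [hx, Matrix.dotProduct_mulVec, ← Matrix.mulVec_transpose, Matrix.mulVec_mulVec, hS,
      Matrix.one_mulVec]
  have hxx : x ⬝ᵥ x = s ⬝ᵥ s := hxs s
  have hqeq : x ⬝ᵥ (M *ᵥ x) = s ⬝ᵥ ((Sᵀ * M * S) *ᵥ s) := by
    rw [← Matrix.mulVec_mulVec, ← Matrix.mulVec_mulVec]
    rw [Matrix.dotProduct_mulVec s, Matrix.vecMul_transpose]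
  have hqB : b i * (s ⬝ᵥ s) ≤ s ⬝ᵥ ((Sᵀ * M * S) *ᵥ s) := by
    have hBs : (Sᵀ * M * S) *ᵥ s = ∑ l, (c l * ν (ε (el l))) • w (ε (el l)) := by
      rw [hs, mulVec_sum']
      congr 1; funext l
      rw [Matrix.mulVec_smul, hw, smul_smul]
    have h4 : ∀ l, s ⬝ᵥ ((c l * ν (ε (el l))) • w (ε (el l))) = b (el l) * (c l * c l) := by
      intro l
      rw [dotProduct_smul, smul_eq_mul, dotProduct_comm, hws l, ← hbe (el l)]
      ring
    have h7 : s ⬝ᵥ ((Sᵀ * M * S) *ᵥ s) = ∑ l, b (el l) * (c l * c l) := by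
      rw [hBs, dotProduct_sum']
      exact Finset.sum_congr rfl fun l _ => h4 l
    rw [h7, hss, Finset.mul_sum]
    apply Finset.sum_le_sum
    intro l _
    apply mul_le_mul_of_nonneg_right _ (mul_self_nonneg _)
    apply hbmono
    exact Fin.mk_le_mk.mpr (by omega)
  have hconstraint : ∀ j : Fin (Fintype.card V), (j : ℕ) < (i : ℕ) → v (e j) ⬝ᵥ x = 0 := by
    intro j hj
    have h5 : (Amat *ᵥ c) ⟨(j : ℕ), hj⟩ = 0 := by
      rw [hcA]; rfl
    have h6 : v (e j) ⬝ᵥ x = (Amat *ᵥ c) ⟨(j : ℕ), hj⟩ := by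
      have her : er ⟨(j : ℕ), hj⟩ = j := Fin.ext rfl
      have hxsum : x = ∑ l, c l • (S *ᵥ w (ε (el l))) := by
        rw [hx, hs, mulVec_sum']
        exact Finset.sum_congr rfl fun l _ => Matrix.mulVec_smul S (c l) _
      rw [hxsum, dotProduct_sum']
      show _ = ∑ l, Amat ⟨(j : ℕ), hj⟩ l * c l
      refine Finset.sum_congr rfl fun l _ => ?_
      rw [dotProduct_smul, smul_eq_mul]
      show c l * (v (e j) ⬝ᵥ (S *ᵥ w (ε (el l))))
        = (v (e (er ⟨(j : ℕ), hj⟩)) ⬝ᵥ (S *ᵥ w (ε (el l)))) * c l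
      rw [her, mul_comm]
    rw [h6, h5]
  have hqM : x ⬝ᵥ (M *ᵥ x) ≤ a i' * (x ⬝ᵥ x) := by
    have hd : ∀ t, v t ⬝ᵥ (M *ᵥ x) = μ t * (v t ⬝ᵥ x) := by
      intro t
      rw [Matrix.dotProduct_mulVec, ← Matrix.mulVec_transpose, hMt, hv t,
        smul_dotProduct, smul_eq_mul]
    calc x ⬝ᵥ (M *ᵥ x) = ∑ t, (v t ⬝ᵥ x) * (v t ⬝ᵥ (M *ᵥ x)) := hpar _ _
      _ = ∑ t, μ t * ((v t ⬝ᵥ x) * (v t ⬝ᵥ x)) := by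
          refine Finset.sum_congr rfl fun t _ => ?_
          rw [hd t]; ring
      _ = ∑ j : Fin (Fintype.card V), μ (e j) * ((v (e j) ⬝ᵥ x) * (v (e j) ⬝ᵥ x)) :=
          (Equiv.sum_comp e fun t => μ t * ((v t ⬝ᵥ x) * (v t ⬝ᵥ x))).symm
      _ ≤ ∑ j : Fin (Fintype.card V), a i' * ((v (e j) ⬝ᵥ x) * (v (e j) ⬝ᵥ x)) := by
          apply Finset.sum_le_sum
          intro j _
          by_cases hj : (j : ℕ) < (i : ℕ)
          · rw [hconstraint j hj]; simp
          · rw [← hae j]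
            exact mul_le_mul_of_nonneg_right (hamono (Fin.mk_le_mk.mpr (by omega)))
              (mul_self_nonneg _)
      _ = a i' * (x ⬝ᵥ x) := by
          rw [← Finset.mul_sum]
          congr 1
          rw [hpar x x]
          exact Equiv.sum_comp e fun t => (v t ⬝ᵥ x) * (v t ⬝ᵥ x)
  have hfinal : b i * (s ⬝ᵥ s) ≤ a i' * (s ⬝ᵥ s) := by
    calc b i * (s ⬝ᵥ s) ≤ s ⬝ᵥ ((Sᵀ * M * S) *ᵥ s) := hqB
      _ = x ⬝ᵥ (M *ᵥ x) := hqeq.symm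
      _ ≤ a i' * (x ⬝ᵥ x) := hqM
      _ = a i' * (s ⬝ᵥ s) := by rw [hxx]
  exact le_of_mul_le_mul_right (by simpa [mul_comm] using hfinal) hspos

lemma eigvec_of_root {m : Type*} [Fintype m] [DecidableEq m]
    (B : Matrix m m ℝ) (c : ℝ) (h : B.charpoly.eval c = 0) :
    ∃ w0, w0 ≠ 0 ∧ B *ᵥ w0 = c • w0 := by
  have hmap : (B.charmatrix.map (Polynomial.eval c)) = c • (1 : Matrix m m ℝ) - B := by
    apply Matrix.ext; intro i j
    by_cases hij : i = j
    · subst hij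
      rw [Matrix.map_apply, Matrix.charmatrix_apply_eq]
      simp [Matrix.smul_apply, Matrix.one_apply]
    · rw [Matrix.map_apply, Matrix.charmatrix_apply_ne _ _ _ hij]
      simp [Matrix.smul_apply, Matrix.one_apply_ne hij, Matrix.sub_apply]
  have hdet : (c • (1 : Matrix m m ℝ) - B).det = 0 := by
    have h2 := RingHom.map_det (Polynomial.evalRingHom c) B.charmatrix
    have h3 : (Polynomial.evalRingHom c) B.charmatrix.det = B.charpoly.eval c := rfl
    have h4 : (Polynomial.evalRingHom c).mapMatrix B.charmatrix
        = B.charmatrix.map (Polynomial.eval c) := rfl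
    rw [← hmap, ← h4, ← h2, h3, h]
  obtain ⟨w0, hw0, hw⟩ := Matrix.exists_mulVec_eq_zero_iff.mpr hdet
  refine ⟨w0, hw0, ?_⟩
  rw [Matrix.sub_mulVec, Matrix.smul_mulVec, Matrix.one_mulVec] at hw
  exact (sub_eq_zero.mp hw).symm

/-- Haemers: the eigenvalues of the quotient matrix of a partitioned
symmetric matrix interlace the eigenvalues of the matrix; if the partition is equitable,
every eigenvalue of the quotient matrix is an eigenvalue of the matrix. -/
theorem quotient_matrix_interlacing {V : Type*} [Fintype V] [DecidableEq V] {k : ℕ}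
    {M : Matrix V V ℝ} (hM : M.IsHermitian)
    (p : V → Fin k) (hp : Function.Surjective p) (hk : k ≤ Fintype.card V)
    (B : Matrix (Fin k) (Fin k) ℝ)
    (hB : ∀ i j, B i j =
      (∑ u : V, ∑ v : V, if p u = i ∧ p v = j then M u v else 0) /
        (Fintype.card {u : V // p u = i} : ℝ))
    (b : Fin k → ℝ) (hbmono : Antitone b)
    (hb : B.charpoly = ∏ i : Fin k, (Polynomial.X - Polynomial.C (b i)))
    (a : Fin (Fintype.card V) → ℝ) (ha : IsDescSpectrum hM a) :
    (∀ i : Fin k,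
        b i ≤ a ⟨i, lt_of_lt_of_le i.2 hk⟩ ∧
        a ⟨Fintype.card V - k + i, by omega⟩ ≤ b i) ∧
    ((∀ (i j : Fin k) (u : V), p u = i →
        (∑ v : V, if p v = j then M u v else 0) = B i j) →
      ∀ i : Fin k, ∃ j : Fin (Fintype.card V), a j = b i) := by
  classical
  obtain ⟨hamono, e, hae⟩ := ha
  have hMt : Mᵀ = M := by
    rw [← Matrix.conjTranspose_eq_transpose_of_trivial, hM]
  obtain ⟨v, hv, hvo, hpar⟩ := eig_data hM
  have hfib : ∀ j : Fin k, 0 < Fintype.card {u : V // p u = j} := fun j =>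
    Fintype.card_pos_iff.mpr ⟨⟨(hp j).choose, (hp j).choose_spec⟩⟩
  set nn : Fin k → ℝ := fun j => (Fintype.card {u : V // p u = j} : ℝ) with hnn
  have hn : ∀ j, 0 < nn j := fun j => by
    have h0 : (0:ℝ) < (Fintype.card {u : V // p u = j} : ℝ) := Nat.cast_pos.mpr (hfib j)
    exact h0
  have hsqpos : ∀ j, 0 < Real.sqrt (nn j) := fun j => Real.sqrt_pos.mpr (hn j)
  set S : Matrix V (Fin k) ℝ :=
    Matrix.of (fun u j => if p u = j then (Real.sqrt (nn j))⁻¹ else 0) with hSdef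
  have hcard : ∀ i : Fin k, (∑ u : V, if p u = i then (1:ℝ) else 0) = nn i := by
    intro i
    calc (∑ u : V, if p u = i then (1:ℝ) else 0)
        = ∑ _u ∈ Finset.univ.filter (fun u => p u = i), (1:ℝ) :=
          (Finset.sum_filter _ _).symm
      _ = ((Finset.univ.filter (fun u => p u = i)).card : ℝ) := by
          rw [Finset.sum_const, nsmul_eq_mul, mul_one]
      _ = nn i := by
          have hcs : Fintype.card {u : V // p u = i}
              = (Finset.univ.filter (fun u => p u = i)).card := Fintype.card_subtype _
          rw [← hcs]
  have hS1 : Sᵀ * S = 1 := by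
    apply Matrix.ext; intro i j
    rw [Matrix.mul_apply]
    simp only [Matrix.transpose_apply, hSdef, Matrix.of_apply]
    by_cases h : i = j
    · subst h
      rw [Matrix.one_apply_eq]
      have hss : (Real.sqrt (nn i))⁻¹ * (Real.sqrt (nn i))⁻¹ = (nn i)⁻¹ := by
        rw [← mul_inv, Real.mul_self_sqrt (hn i).le]
      have hterm : ∀ u : V, (if p u = i then (Real.sqrt (nn i))⁻¹ else 0) *
          (if p u = i then (Real.sqrt (nn i))⁻¹ else 0)
          = (nn i)⁻¹ * (if p u = i then (1:ℝ) else 0) := by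
        intro u; by_cases hu : p u = i <;> simp [hu, hss]
      rw [Finset.sum_congr rfl fun u _ => hterm u, ← Finset.mul_sum, hcard i,
        inv_mul_cancel₀ (ne_of_gt (hn i))]
    · rw [Matrix.one_apply_ne h]
      apply Finset.sum_eq_zero
      intro u _
      by_cases hu : p u = i
      · have hnj : p u ≠ j := by rw [hu]; exact h
        simp [hu, hnj, h]
      · simp [hu]
  set B' : Matrix (Fin k) (Fin k) ℝ := Sᵀ * M * S with hB'def
  have hB'herm : B'.IsHermitian := by
    rw [hB'def, show Sᵀ = Sᴴ from (Matrix.conjTranspose_eq_transpose_of_trivial S).symm]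
    exact Matrix.isHermitian_conjTranspose_mul_mul S hM
  set NN : Matrix (Fin k) (Fin k) ℝ := Matrix.of (fun i j =>
    ∑ u : V, ∑ t : V, if p u = i ∧ p t = j then M u t else 0) with hNNdef
  have hBNN : ∀ i j, B i j = NN i j / nn i := fun i j => hB i j
  have hB'NN : ∀ i j, B' i j
      = NN i j * ((Real.sqrt (nn i))⁻¹ * (Real.sqrt (nn j))⁻¹) := by
    intro i j
    rw [hB'def]
    calc (Sᵀ * M * S) i j
        = ∑ t, (∑ u, (if p u = i then (Real.sqrt (nn i))⁻¹ else 0) * M u t) *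
            (if p t = j then (Real.sqrt (nn j))⁻¹ else 0) := by
          rw [Matrix.mul_apply]
          refine Finset.sum_congr rfl fun t _ => ?_
          rw [Matrix.mul_apply]
          simp only [Matrix.transpose_apply, hSdef, Matrix.of_apply]
      _ = ∑ t, ∑ u, ((if p u = i then (Real.sqrt (nn i))⁻¹ else 0) * M u t *
            (if p t = j then (Real.sqrt (nn j))⁻¹ else 0)) := by
          refine Finset.sum_congr rfl fun t _ => ?_
          rw [Finset.sum_mul]
      _ = ∑ u, ∑ t, ((if p u = i then (Real.sqrt (nn i))⁻¹ else 0) * M u t *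
            (if p t = j then (Real.sqrt (nn j))⁻¹ else 0)) := Finset.sum_comm
      _ = ∑ u, ∑ t, (if p u = i ∧ p t = j then M u t else 0) *
            ((Real.sqrt (nn i))⁻¹ * (Real.sqrt (nn j))⁻¹) := by
          refine Finset.sum_congr rfl fun u _ => Finset.sum_congr rfl fun t _ => ?_
          by_cases hu : p u = i <;> by_cases ht : p t = j <;> simp [hu, ht] <;> ring
      _ = NN i j * ((Real.sqrt (nn i))⁻¹ * (Real.sqrt (nn j))⁻¹) := by
          rw [hNNdef]
          simp only [Matrix.of_apply]
          rw [Finset.sum_mul]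
          refine Finset.sum_congr rfl fun u _ => ?_
          rw [Finset.sum_mul]
  have hDD : Matrix.diagonal (fun j => Real.sqrt (nn j)) *
      Matrix.diagonal (fun j => (Real.sqrt (nn j))⁻¹) = 1 := by
    rw [Matrix.diagonal_mul_diagonal]
    have : (fun j : Fin k => Real.sqrt (nn j) * (Real.sqrt (nn j))⁻¹) = fun _ => (1:ℝ) := by
      funext j
      exact mul_inv_cancel₀ (ne_of_gt (hsqpos j))
    rw [this, Matrix.diagonal_one]
  have hsim : B' = Matrix.diagonal (fun j => Real.sqrt (nn j)) * B *
      Matrix.diagonal (fun j => (Real.sqrt (nn j))⁻¹) := by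
    apply Matrix.ext; intro i j
    rw [Matrix.mul_diagonal, Matrix.diagonal_mul, hB'NN, hBNN]
    have hnnsq : Real.sqrt (nn i) * Real.sqrt (nn i) = nn i := Real.mul_self_sqrt (hn i).le
    have h1 : Real.sqrt (nn i) ≠ 0 := ne_of_gt (hsqpos i)
    have h2 : Real.sqrt (nn j) ≠ 0 := ne_of_gt (hsqpos j)
    have h3 : nn i ≠ 0 := ne_of_gt (hn i)
    field_simp
    linear_combination (NN i j) * hnnsq.symm
  have hcharBB : B'.charpoly = B.charpoly := by
    rw [hsim]
    exact charpoly_similar _ _ _ hDD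
  set ν := hB'herm.eigenvalues with hν
  have hprodeq : (∏ i, (X - C (b i))) = ∏ i, (X - C (ν i)) := by
    rw [← hb, ← hcharBB, hermitian_charpoly hB'herm]
  obtain ⟨ε, hbe⟩ := exists_perm_of_prod_eq b ν hbmono hprodeq
  obtain ⟨w, hw, hwo, _⟩ := eig_data hB'herm
  have hwB : ∀ t, (Sᵀ * M * S) *ᵥ w t = ν t • w t := by
    intro t
    rw [← hB'def]
    exact hw t
  constructor
  · intro i
    constructor
    · exact core M hMt v hM.eigenvalues hv hpar S hS1 w ν hwB hwo a e hamono hae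
        b ε hbmono hbe hk i
    · have hcoreneg := core (-M) (by rw [Matrix.transpose_neg, hMt]) v
        (fun t => -hM.eigenvalues t)
        (fun t => by rw [Matrix.neg_mulVec, hv t, neg_smul])
        hpar S hS1 w (fun t => -ν t)
        (fun t => by
          have hEq : Sᵀ * (-M) * S = -(Sᵀ * M * S) := by
            rw [Matrix.mul_neg, Matrix.neg_mul]
          rw [hEq, Matrix.neg_mulVec, hwB t, neg_smul])
        hwo (fun j => -a j.rev) (Fin.revPerm.trans e)
        (fun i j hij => neg_le_neg (hamono (Fin.rev_le_rev.mpr hij)))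
        (fun j => congrArg Neg.neg (hae j.rev))
        (fun j => -b j.rev) (Fin.revPerm.trans ε)
        (fun i j hij => neg_le_neg (hbmono (Fin.rev_le_rev.mpr hij)))
        (fun j => congrArg Neg.neg (hbe j.rev))
        hk i.rev
      simp only [Fin.rev_rev] at hcoreneg
      have hidx : ((⟨(i.rev : ℕ), lt_of_lt_of_le i.rev.2 hk⟩ : Fin (Fintype.card V)).rev)
          = (⟨Fintype.card V - k + (i : ℕ), by omega⟩ : Fin (Fintype.card V)) := by
        apply Fin.ext
        rw [Fin.val_rev]
        have h1 : ((⟨(i.rev : ℕ), lt_of_lt_of_le i.rev.2 hk⟩ : Fin (Fintype.card V)) : ℕ)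
            = (i.rev : ℕ) := rfl
        have h4 : ((⟨Fintype.card V - k + (i : ℕ), by omega⟩ : Fin (Fintype.card V)) : ℕ)
            = Fintype.card V - k + (i : ℕ) := rfl
        rw [h1, h4, Fin.val_rev]
        have h2 : (i : ℕ) < k := i.2
        have h3 : k ≤ Fintype.card V := hk
        omega
      rw [hidx] at hcoreneg
      exact neg_le_neg_iff.mp hcoreneg
  · intro hrow i
    have hroot : B.charpoly.eval (b i) = 0 := by
      rw [hb, Polynomial.eval_prod]
      apply Finset.prod_eq_zero (Finset.mem_univ i)
      simp
    obtain ⟨w0, hw0ne, hw0⟩ := eigvec_of_root B (b i) hroot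
    set S₁ : Matrix V (Fin k) ℝ := Matrix.of (fun u j => if p u = j then (1:ℝ) else 0)
      with hS₁
    have hMS : M * S₁ = S₁ * B := by
      apply Matrix.ext; intro u j
      rw [Matrix.mul_apply, Matrix.mul_apply]
      have h1 : (∑ t, M u t * S₁ t j) = ∑ t, if p t = j then M u t else 0 := by
        refine Finset.sum_congr rfl fun t _ => ?_
        by_cases ht : p t = j <;> simp [hS₁, ht]
      have h2 : (∑ l, S₁ u l * B l j) = B (p u) j := by
        simp [hS₁, ite_mul, one_mul, zero_mul, Finset.sum_ite_eq]
      rw [h1, h2, hrow (p u) j u rfl]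
    set x0 := S₁ *ᵥ w0 with hx0
    have hx0u : ∀ u, x0 u = w0 (p u) := by
      intro u
      rw [hx0]
      simp [Matrix.mulVec, dotProduct, hS₁, ite_mul, one_mul, zero_mul, Finset.sum_ite_eq]
    have hx0ne : x0 ≠ 0 := by
      obtain ⟨j, hj⟩ := Function.ne_iff.mp hw0ne
      obtain ⟨u, hu⟩ := hp j
      intro hzero
      apply hj
      have := congrFun hzero u
      rwa [hx0u u, hu, Pi.zero_apply] at this
    have hMx0 : M *ᵥ x0 = b i • x0 := by
      rw [hx0, Matrix.mulVec_mulVec, hMS, ← Matrix.mulVec_mulVec, hw0, Matrix.mulVec_smul]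
    have hex : ∃ t, hM.eigenvalues t = b i := by
      by_contra hcon
      push_neg at hcon
      have hd0 : ∀ t, v t ⬝ᵥ x0 = 0 := by
        intro t
        have h3 : v t ⬝ᵥ (M *ᵥ x0) = hM.eigenvalues t * (v t ⬝ᵥ x0) := by
          rw [Matrix.dotProduct_mulVec, ← Matrix.mulVec_transpose, hMt, hv t,
            smul_dotProduct, smul_eq_mul]
        rw [hMx0, dotProduct_smul, smul_eq_mul] at h3
        have h4 : (hM.eigenvalues t - b i) * (v t ⬝ᵥ x0) = 0 := by
          ring_nf
          linarith [h3]
        rcases mul_eq_zero.mp h4 with h5 | h5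
        · exact absurd (by linarith : hM.eigenvalues t = b i) (hcon t)
        · exact h5
      have hxx0 : x0 ⬝ᵥ x0 = 0 := by
        rw [hpar x0 x0]
        apply Finset.sum_eq_zero
        intro t _
        rw [hd0 t, mul_zero]
      obtain ⟨u, hu⟩ := Function.ne_iff.mp hx0ne
      have hpos : 0 < x0 ⬝ᵥ x0 :=
        Finset.sum_pos' (fun t _ => mul_self_nonneg _)
          ⟨u, Finset.mem_univ u, mul_self_pos.mpr hu⟩
      rw [hxx0] at hpos
      exact lt_irrefl 0 hpos
    obtain ⟨t, ht⟩ := hex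
    exact ⟨e.symm t, by rw [hae, Equiv.apply_symm_apply, ht]⟩


end SpreadPaper
end
end
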